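/- arXiv:1409.0120 — 9 statements merged into one kernel-verified Lean document; each statement's English description precedes it below -/
import Mathlib

section
/- Let P be a mixed polynomial in n complex variables and w ∈ ℂⁿ. Then w is a singularity of P if and only if there exists α ∈ ℂ with |α| = 1 such that conj(∂P/∂z_j(w)) = α·(∂P/∂z̄_j(w)) for every j = 1,…,n. -/
open Complex

noncomputable section

/-- The Wirtinger derivative `∂P/∂z_j` at `w`, defined via the real Fréchet derivative:
`∂P/∂z_j = (1/2)(∂P/∂x_j − i ∂P/∂y_j)`. -/
def wD {n : ℕ} (P : (Fin n → ℂ) → ℂ) (j : Fin n) (w : Fin n → ℂ) : ℂ :=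
  (1 / 2 : ℂ) *
    (fderiv ℝ P w (Pi.single j 1) - Complex.I * fderiv ℝ P w (Pi.single j Complex.I))

/-- The Wirtinger derivative `∂P/∂z̄_j` at `w`:
`∂P/∂z̄_j = (1/2)(∂P/∂x_j + i ∂P/∂y_j)`. -/
def wDbar {n : ℕ} (P : (Fin n → ℂ) → ℂ) (j : Fin n) (w : Fin n → ℂ) : ℂ :=
  (1 / 2 : ℂ) *
    (fderiv ℝ P w (Pi.single j 1) + Complex.I * fderiv ℝ P w (Pi.single j Complex.I))

/-- `P : ℂⁿ → ℂ` is a mixed polynomial: a finite sum `Σ c_{ν,μ} z^ν (conj z)^μ`. -/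
def IsMixedPoly {n : ℕ} (P : (Fin n → ℂ) → ℂ) : Prop :=
  ∃ c : ((Fin n → ℕ) × (Fin n → ℕ)) →₀ ℂ, ∀ z : Fin n → ℂ,
    P z = c.sum fun νμ a =>
      a * (∏ j, z j ^ νμ.1 j) * ∏ j, (starRingEnd ℂ) (z j) ^ νμ.2 j

/-- `w` is a singularity of `P` : the gradients (real differentials) of `Re P` and `Im P`
are linearly dependent at `w`. -/
def IsSingularity {n : ℕ} (P : (Fin n → ℂ) → ℂ) (w : Fin n → ℂ) : Prop :=
  ∃ a b : ℝ, ¬(a = 0 ∧ b = 0) ∧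
    a • fderiv ℝ (fun z => (P z).re) w + b • fderiv ℝ (fun z => (P z).im) w = 0

/-- Mixed polynomials are real-differentiable. -/
lemma isMixedPoly_differentiable {n : ℕ} {P : (Fin n → ℂ) → ℂ} (hP : IsMixedPoly P) :
    Differentiable ℝ P := by
  obtain ⟨c, hc⟩ := hP
  have hPe : P = fun z : Fin n → ℂ => c.sum fun νμ a =>
      a * (∏ j, z j ^ νμ.1 j) * ∏ j, (starRingEnd ℂ) (z j) ^ νμ.2 j := funext hc
  rw [hPe]
  have hconj : Differentiable ℝ (fun z : ℂ => (starRingEnd ℂ) z) :=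
    Complex.conjCLE.differentiable
  unfold Finsupp.sum
  apply Differentiable.fun_sum
  intro p hp x
  apply DifferentiableAt.mul
  · apply DifferentiableAt.const_mul
    exact (HasFDerivAt.finset_prod (fun j _ =>
      (((differentiable_apply j).differentiableAt (x := x)).pow (p.1 j)).hasFDerivAt)).differentiableAt
  · exact (HasFDerivAt.finset_prod (fun j _ =>
      (((hconj.comp (differentiable_apply j)).differentiableAt (x := x)).pow (p.2 j)).hasFDerivAt)).differentiableAt

/-- Decomposition of a real-linear map on `ℂⁿ` along the real basis. -/
lemma clm_decomp {n : ℕ} (L : (Fin n → ℂ) →L[ℝ] ℂ) (v : Fin n → ℂ) :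
    L v = ∑ j, (((v j).re : ℂ) * L (Pi.single j 1) + ((v j).im : ℂ) * L (Pi.single j I)) := by
  have hv : v = ∑ j, ((v j).re • (Pi.single j 1 : Fin n → ℂ)
      + (v j).im • (Pi.single j I : Fin n → ℂ)) := by
    funext k
    simp [Finset.sum_apply, Pi.single_apply, Finset.sum_add_distrib, Finset.sum_ite_eq,
      Complex.real_smul]
  conv_lhs => rw [hv]
  rw [map_sum]
  simp [Complex.real_smul]

/-- Oka's criterion: `w` is a singularity of the mixed polynomial `P` iff there is `α`
with `|α| = 1` and `conj(∂P/∂z_j(w)) = α · ∂P/∂z̄_j(w)` for all `j`. -/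
theorem stmt_1 (n : ℕ) (P : (Fin n → ℂ) → ℂ) (hP : IsMixedPoly P) (w : Fin n → ℂ) :
    IsSingularity P w ↔
      ∃ α : ℂ, ‖α‖ = 1 ∧
        ∀ j : Fin n, (starRingEnd ℂ) (wD P j w) = α * wDbar P j w := by
  have hd : DifferentiableAt ℝ P w := isMixedPoly_differentiable hP w
  set L := fderiv ℝ P w with hL
  have hre : fderiv ℝ (fun z => (P z).re) w = Complex.reCLM.comp L :=
    (Complex.reCLM.hasFDerivAt.comp w hd.hasFDerivAt).fderiv
  have him : fderiv ℝ (fun z => (P z).im) w = Complex.imCLM.comp L :=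
    (Complex.imCLM.hasFDerivAt.comp w hd.hasFDerivAt).fderiv
  constructor
  · rintro ⟨a, b, hab, heq⟩
    set c : ℂ := ⟨a, -b⟩ with hcdef
    have hc0 : c ≠ 0 := by
      intro h
      apply hab
      simpa [hcdef, Complex.ext_iff, neg_eq_zero] using h
    have hcbar : (starRingEnd ℂ) c ≠ 0 := by simpa using hc0
    rw [hre, him] at heq
    have hkey : ∀ v, (c * L v).re = 0 := by
      intro v
      have h2 := ContinuousLinearMap.ext_iff.mp heq v
      simp only [ContinuousLinearMap.add_apply, ContinuousLinearMap.coe_smul',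
        Pi.smul_apply, ContinuousLinearMap.coe_comp', Function.comp_apply,
        Complex.reCLM_apply, Complex.imCLM_apply, smul_eq_mul,
        ContinuousLinearMap.zero_apply] at h2
      simp [hcdef, Complex.mul_re]
      linarith
    refine ⟨-(c / (starRingEnd ℂ) c), by
      simp [norm_div, Complex.norm_conj, div_self, norm_ne_zero_iff.mpr hc0], ?_⟩
    intro j
    have hu := hkey (Pi.single j 1)
    have hv := hkey (Pi.single j I)
    have hu' : c * L (Pi.single j 1) + (starRingEnd ℂ) c * (starRingEnd ℂ) (L (Pi.single j 1)) = 0 := by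
      rw [← map_mul, Complex.add_conj, hu]; simp
    have hv' : c * L (Pi.single j I) + (starRingEnd ℂ) c * (starRingEnd ℂ) (L (Pi.single j I)) = 0 := by
      rw [← map_mul, Complex.add_conj, hv]; simp
    show (starRingEnd ℂ) ((1/2 : ℂ) * (L (Pi.single j 1) - I * L (Pi.single j I)))
        = _ * ((1/2 : ℂ) * (L (Pi.single j 1) + I * L (Pi.single j I)))
    simp only [map_mul, map_sub, map_one, map_div₀, Complex.conj_I, map_ofNat]
    field_simp
    linear_combination hu' + Complex.I * hv'
  · rintro ⟨α, hα, hj⟩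
    obtain ⟨c, hc0, hcα⟩ : ∃ c : ℂ, c ≠ 0 ∧ (starRingEnd ℂ) c * α = -c := by
      rcases eq_or_ne α (-1) with h | h
      · exact ⟨1, one_ne_zero, by simp [h]⟩
      · refine ⟨I*(1+α), by
          simp [eq_neg_iff_add_eq_zero] at h ⊢
          intro h'; exact h (by linear_combination h'), ?_⟩
        have h1 : α * (starRingEnd ℂ) α = 1 := by
          rw [Complex.mul_conj]; norm_cast; rw [Complex.normSq_eq_norm_sq, hα]; norm_num
        simp only [map_mul, map_add, map_one, Complex.conj_I]
        linear_combination -Complex.I * h1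
    have hkeyj : ∀ j : Fin n, (c * L (Pi.single j 1)).re = 0 ∧ (c * L (Pi.single j I)).re = 0 := by
      intro j
      have h := hj j
      set u := L (Pi.single j 1) with hu
      set v := L (Pi.single j I) with hv
      have h' : (starRingEnd ℂ) ((1/2:ℂ)*(u - I*v)) = α * ((1/2:ℂ)*(u+I*v)) := h
      have hu2 : c*u + (starRingEnd ℂ) c * (starRingEnd ℂ) u = (((c*u).re : ℂ))*2 := by
        rw [← map_mul, Complex.add_conj]; push_cast; ring
      have hv2 : c*v + (starRingEnd ℂ) c * (starRingEnd ℂ) v = (((c*v).re : ℂ))*2 := by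
        rw [← map_mul, Complex.add_conj]; push_cast; ring
      simp only [map_mul, map_sub, map_one, map_div₀, Complex.conj_I, map_ofNat] at h'
      have key : (((c*u).re : ℂ))*2 = -I * ((((c*v).re : ℂ))*2) := by
        linear_combination -hu2 - Complex.I * hv2 + 2*(starRingEnd ℂ) c * h'
          + (u + Complex.I*v)*hcα
      have h1 := congrArg Complex.re key
      have h2 := congrArg Complex.im key
      simp at h1 h2
      exact ⟨h1, h2⟩
    refine ⟨c.re, -c.im, ?_, ?_⟩
    · rintro ⟨h1', h2'⟩
      exact hc0 (Complex.ext h1' (neg_eq_zero.mp h2'))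
    · rw [hre, him]
      ext v
      simp only [ContinuousLinearMap.add_apply, ContinuousLinearMap.coe_smul',
        Pi.smul_apply, ContinuousLinearMap.coe_comp', Function.comp_apply,
        Complex.reCLM_apply, Complex.imCLM_apply, smul_eq_mul,
        ContinuousLinearMap.zero_apply]
      have : c.re * (L v).re + -c.im * (L v).im = (c * L v).re := by
        simp [Complex.mul_re]; ring
      rw [this, clm_decomp L v, Finset.mul_sum]
      rw [Complex.re_sum]
      apply Finset.sum_eq_zero
      intro j _
      obtain ⟨h1, h2⟩ := hkeyj j
      have : c * (((v j).re : ℂ) * L (Pi.single j 1) + ((v j).im : ℂ) * L (Pi.single j I))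
          = ((v j).re : ℂ) * (c * L (Pi.single j 1)) + ((v j).im : ℂ) * (c * L (Pi.single j I)) := by
        ring
      rw [this]
      simp [Complex.add_re, Complex.re_ofReal_mul, h1, h2]

end
end

section
/- Let P be a polar weighted homogeneous mixed polynomial in n variables with weights (p_1,…,p_n) and polar degree d_p. If w ∈ ℂⁿ is a singularity of P, then s∘w = (s^{p_1}w_1,…,s^{p_n}w_n) is also a singularity of P for every s ∈ ℂ with |s| = 1. -/
open Complex

noncomputable section

lemma diff_prod {n : ℕ} (f : Fin n → (Fin n → ℂ) → ℂ) (h : ∀ j, Differentiable ℝ (f j)) :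
    Differentiable ℝ (fun y => ∏ j, f j y) := by
  classical
  intro x
  exact (HasFDerivAt.finset_prod (fun i _ => ((h i x).hasFDerivAt))).differentiableAt

lemma diffP {n : ℕ} (P : (Fin n → ℂ) → ℂ)
    (hP : ∃ c : ((Fin n → ℕ) × (Fin n → ℕ)) →₀ ℂ, ∀ z : Fin n → ℂ,
      P z = c.sum fun νμ a =>
        a * (∏ j, z j ^ νμ.1 j) * ∏ j, (starRingEnd ℂ) (z j) ^ νμ.2 j) :
    Differentiable ℝ P := by
  obtain ⟨c, hc⟩ := hP
  have : P = fun z => c.sum fun νμ a =>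
      a * (∏ j, z j ^ νμ.1 j) * ∏ j, (starRingEnd ℂ) (z j) ^ νμ.2 j := funext hc
  rw [this]
  unfold Finsupp.sum
  apply Differentiable.fun_sum
  intro i _
  apply Differentiable.mul
  apply Differentiable.mul
  · exact differentiable_const _
  · exact diff_prod _ fun j => (differentiable_pi.mp differentiable_id j).pow _
  · exact diff_prod _ fun j =>
      (Complex.conjCLE.differentiable.comp (differentiable_pi.mp differentiable_id j)).pow _

private lemma key_sing (n : ℕ) (P : (Fin n → ℂ) → ℂ)
    (hP : ∃ c : ((Fin n → ℕ) × (Fin n → ℕ)) →₀ ℂ, ∀ z : Fin n → ℂ,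
      P z = c.sum fun νμ a =>
        a * (∏ j, z j ^ νμ.1 j) * ∏ j, (starRingEnd ℂ) (z j) ^ νμ.2 j)
    (p : Fin n → ℤ) (dp : ℕ)
    (hpolar : ∀ s : ℂ, ‖s‖ = 1 → ∀ z : Fin n → ℂ,
      P (fun j => s ^ p j * z j) = s ^ dp * P z)
    (w : Fin n → ℂ)
    (hw : ∃ a b : ℝ, ¬(a = 0 ∧ b = 0) ∧
      a • fderiv ℝ (fun z => (P z).re) w + b • fderiv ℝ (fun z => (P z).im) w = 0) :
    ∀ s : ℂ, ‖s‖ = 1 → ∃ a b : ℝ, ¬(a = 0 ∧ b = 0) ∧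
      a • fderiv ℝ (fun z => (P z).re) (fun j => s ^ p j * w j)
        + b • fderiv ℝ (fun z => (P z).im) (fun j => s ^ p j * w j) = 0 := by
  intro s hs
  have hdiff : Differentiable ℝ P := diffP P hP
  have hsne : s ≠ 0 := by
    intro h; rw [h] at hs; simp at hs
  have hss : s * (starRingEnd ℂ) s = 1 := by
    rw [Complex.mul_conj]
    norm_cast
    rw [Complex.normSq_eq_norm_sq, hs]; norm_num
  -- the linear map M
  set M : (Fin n → ℂ) →L[ℝ] (Fin n → ℂ) :=
    ContinuousLinearMap.pi (fun j => (s ^ p j) • ContinuousLinearMap.proj j) with hM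
  have hMapp : ∀ z : Fin n → ℂ, M z = fun j => s ^ p j * z j := by
    intro z; funext j; simp [hM, smul_eq_mul]
  set wS : Fin n → ℂ := fun j => s ^ p j * w j with hwS
  set L : (Fin n → ℂ) →L[ℝ] ℂ := fderiv ℝ P w with hL
  set L' : (Fin n → ℂ) →L[ℝ] ℂ := fderiv ℝ P wS with hL'
  -- chain rule
  have hcomp : L'.comp M = (s : ℂ) ^ dp • L := by
    have h1 : fderiv ℝ (P ∘ M) w = L'.comp M := by
      rw [fderiv_comp w (by rw [hMapp]; exact hdiff _)
        (M.differentiable.differentiableAt), M.fderiv, hMapp]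
    have h2 : (P ∘ M) = fun z => (s : ℂ) ^ dp * P z := by
      funext z; simp only [Function.comp, hMapp, hpolar s hs z]
    rw [← h1, h2, fderiv_const_mul (hdiff w)]
  -- re/im fderivs
  have hre : ∀ x : Fin n → ℂ, fderiv ℝ (fun z => (P z).re) x
      = Complex.reCLM.comp (fderiv ℝ P x) := fun x =>
    (Complex.reCLM.hasFDerivAt.comp x (hdiff x).hasFDerivAt).fderiv
  have him : ∀ x : Fin n → ℂ, fderiv ℝ (fun z => (P z).im) x
      = Complex.imCLM.comp (fderiv ℝ P x) := fun x =>
    (Complex.imCLM.hasFDerivAt.comp x (hdiff x).hasFDerivAt).fderiv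
  obtain ⟨a, b, hab, heq⟩ := hw
  set c : ℂ := ⟨a, -b⟩ with hc
  have hcne : c ≠ 0 := by
    intro h
    apply hab
    constructor
    · exact congrArg Complex.re h
    · have := congrArg Complex.im h
      simpa [hc] using this
  have hLkey : ∀ v, (c * L v).re = 0 := by
    intro v
    have := ContinuousLinearMap.ext_iff.mp heq v
    simp only [hre, him, ContinuousLinearMap.add_apply, ContinuousLinearMap.coe_smul',
      Pi.smul_apply, ContinuousLinearMap.coe_comp', Function.comp_apply,
      ContinuousLinearMap.zero_apply, smul_eq_mul, Complex.reCLM_apply,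
      Complex.imCLM_apply] at this
    simp only [Complex.mul_re, hc]
    simp only [← hL] at this
    linarith [this]
  set c' : ℂ := c * ((starRingEnd ℂ) s) ^ dp with hc'
  have hc'ne : c' ≠ 0 := by
    apply mul_ne_zero hcne
    exact pow_ne_zero _ (by simpa using hsne)
  refine ⟨c'.re, -c'.im, ?_, ?_⟩
  · rintro ⟨h1, h2⟩
    exact hc'ne (Complex.ext h1 (by simpa using h2))
  · ext v
    simp only [hre, him, ContinuousLinearMap.add_apply, ContinuousLinearMap.coe_smul',
      Pi.smul_apply, ContinuousLinearMap.coe_comp', Function.comp_apply,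
      ContinuousLinearMap.zero_apply, smul_eq_mul, Complex.reCLM_apply,
      Complex.imCLM_apply]
    set u : Fin n → ℂ := fun j => ((starRingEnd ℂ) s) ^ p j * v j with hu
    have hMu : M u = v := by
      rw [hMapp]; funext j
      rw [← mul_assoc, ← mul_zpow, hss, one_zpow, one_mul]
    have hL'v : L' v = (s : ℂ) ^ dp * L u := by
      have := ContinuousLinearMap.ext_iff.mp hcomp u
      simpa [hMu, smul_eq_mul] using this
    have : (c' * L' v).re = 0 := by
      rw [hL'v, hc']
      have h1 : (starRingEnd ℂ) s ^ dp * s ^ dp = 1 := by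
        rw [← mul_pow, mul_comm, hss, one_pow]
      have h2 : c * (starRingEnd ℂ) s ^ dp * (s ^ dp * L u)
          = c * ((starRingEnd ℂ) s ^ dp * s ^ dp) * L u := by ring
      rw [h2, h1, mul_one]
      exact hLkey u
    rw [Complex.mul_re] at this
    simp only [← hL']
    linarith [this]



/-- `P` is polar weighted homogeneous with weights `p` and polar degree `dp`:
`P(s^{p_1}z_1,…,s^{p_n}z_n) = s^{dp}·P(z)` for all `s` on the unit circle. -/
def IsPolarWH {n : ℕ} (P : (Fin n → ℂ) → ℂ) (p : Fin n → ℤ) (dp : ℕ) : Prop :=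
  ∀ s : ℂ, ‖s‖ = 1 → ∀ z : Fin n → ℂ,
    P (fun j => s ^ p j * z j) = s ^ dp * P z

/-- `P` is radial weighted homogeneous with weights `q` and radial degree `dr`:
`P(r^{q_1}z_1,…,r^{q_n}z_n) = r^{dr}·P(z)` for all real `r ≠ 0`. -/
def IsRadialWH {n : ℕ} (P : (Fin n → ℂ) → ℂ) (q : Fin n → ℤ) (dr : ℕ) : Prop :=
  ∀ r : ℝ, r ≠ 0 → ∀ z : Fin n → ℂ,
    P (fun j => (r : ℂ) ^ q j * z j) = (r : ℂ) ^ dr * P z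

/-- The singularities of a polar weighted homogeneous mixed polynomial are invariant
under the circle action. -/
theorem stmt_3 (n : ℕ) (P : (Fin n → ℂ) → ℂ) (hP : IsMixedPoly P)
    (p : Fin n → ℤ) (hgcd : Finset.univ.gcd p = 1)
    (dp : ℕ) (hdp : 0 < dp) (hpolar : IsPolarWH P p dp)
    (w : Fin n → ℂ) (hw : IsSingularity P w) :
    ∀ s : ℂ, ‖s‖ = 1 → IsSingularity P (fun j => s ^ p j * w j) := by
  intro s hs
  exact key_sing n P hP p dp hpolar w hw s hs

end
end

section
/- Let P be a mixed polynomial in n variables and w ∈ ℂⁿ a point at which the mixed Hessian H(P)(w) has rank 2n. Then there exists u₀ ∈ ℝ such that det(H_ℝ(Re P)(w) + u₀·H_ℝ(Im P)(w)) ≠ 0, i.e. the real Hessian at w of the function Re P + u₀·Im P : ℝ^{2n} → ℝ (the imaginary part of P after the linear change of coordinates (w_1,w_2) ↦ (w_1, w_1 + u₀w_2) on the target ℝ²) is nonsingular. -/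
open Complex

noncomputable section

/-- The mixed Hessian `H(P)` of a mixed polynomial, a `2n × 2n` matrix (indexed by
`Fin n ⊕ Fin n`) with block form
`[[∂²P/∂z_j∂z_k, ∂²P/∂z_j∂z̄_k], [∂²P/∂z̄_j∂z_k, ∂²P/∂z̄_j∂z̄_k]]`. -/
def mixedHessian {n : ℕ} (P : (Fin n → ℂ) → ℂ) (w : Fin n → ℂ) :
    Matrix (Fin n ⊕ Fin n) (Fin n ⊕ Fin n) ℂ :=
  Matrix.of fun a b =>
    match a, b with
    | Sum.inl j, Sum.inl k => wD (fun z => wD P k z) j w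
    | Sum.inl j, Sum.inr k => wD (fun z => wDbar P k z) j w
    | Sum.inr j, Sum.inl k => wDbar (fun z => wD P k z) j w
    | Sum.inr j, Sum.inr k => wDbar (fun z => wDbar P k z) j w

/-- The real coordinate directions of `ℂⁿ ≅ ℝ^{2n}`: `inl j ↦ x_j`-direction,
`inr j ↦ y_j`-direction. -/
def dirC {n : ℕ} : (Fin n ⊕ Fin n) → (Fin n → ℂ)
  | Sum.inl j => Pi.single j 1
  | Sum.inr j => Pi.single j Complex.I

/-- The real Hessian `H_ℝ(η)` of `η : ℂⁿ ≅ ℝ^{2n} → ℝ` in the coordinates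
`(x_1,…,x_n,y_1,…,y_n)`. -/
def realHessian {n : ℕ} (η : (Fin n → ℂ) → ℝ) (w : Fin n → ℂ) :
    Matrix (Fin n ⊕ Fin n) (Fin n ⊕ Fin n) ℝ :=
  Matrix.of fun a b => fderiv ℝ (fun z => fderiv ℝ η z (dirC b)) w (dirC a)

open Matrix
open scoped ContDiff

lemma isMixedPoly_contDiff {n : ℕ} {P : (Fin n → ℂ) → ℂ} (hP : IsMixedPoly P) :
    ContDiff ℝ ∞ P := by
  obtain ⟨c, hc⟩ := hP
  have hPeq : P = fun z => ∑ νμ ∈ c.support,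
      c νμ * (∏ j, z j ^ νμ.1 j) * ∏ j, (starRingEnd ℂ) (z j) ^ νμ.2 j :=
    funext fun z => by rw [hc z, Finsupp.sum]
  rw [hPeq]
  apply ContDiff.sum
  intro i _
  have h1 : ContDiff ℝ ∞ fun z : Fin n → ℂ => ∏ j, z j ^ i.1 j :=
    contDiff_prod fun j _ =>
      ((ContinuousLinearMap.proj (R := ℝ) (φ := fun _ : Fin n => ℂ) j).contDiff).pow _
  have h2 : ContDiff ℝ ∞ fun z : Fin n → ℂ => ∏ j, (starRingEnd ℂ) (z j) ^ i.2 j :=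
    contDiff_prod fun j _ =>
      ((Complex.conjCLE.toContinuousLinearMap.contDiff.comp
        (ContinuousLinearMap.proj (R := ℝ) (φ := fun _ : Fin n => ℂ) j).contDiff)).pow _
  exact (contDiff_const.mul h1).mul h2

def wGen {n : ℕ} (s : ℂ) (Q : (Fin n → ℂ) → ℂ) (j : Fin n) (w : Fin n → ℂ) : ℂ :=
  (1 / 2 : ℂ) *
    (fderiv ℝ Q w (Pi.single j 1) + s * fderiv ℝ Q w (Pi.single j Complex.I))

lemma wD_eq_wGen {n : ℕ} (Q : (Fin n → ℂ) → ℂ) (j : Fin n) (w : Fin n → ℂ) :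
    wD Q j w = wGen (-Complex.I) Q j w := by
  simp only [wD, wGen]; ring

lemma wDbar_eq_wGen {n : ℕ} (Q : (Fin n → ℂ) → ℂ) (j : Fin n) (w : Fin n → ℂ) :
    wDbar Q j w = wGen Complex.I Q j w := rfl

def D2 {n : ℕ} (P : (Fin n → ℂ) → ℂ) (w : Fin n → ℂ) (u v : Fin n → ℂ) : ℂ :=
  fderiv ℝ (fderiv ℝ P) w u v

lemma H1 {n : ℕ} {P : (Fin n → ℂ) → ℂ} (hs : ContDiff ℝ ∞ P) (w : Fin n → ℂ)
    (v : Fin n → ℂ) :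
    HasFDerivAt (fun z => fderiv ℝ P z v)
      ((ContinuousLinearMap.apply ℝ ℂ v).comp (fderiv ℝ (fderiv ℝ P) w)) w := by
  have hdF : Differentiable ℝ (fderiv ℝ P) :=
    (contDiff_infty_iff_fderiv.mp hs).2.differentiable (by simp)
  exact (ContinuousLinearMap.apply ℝ ℂ v).hasFDerivAt.comp w (hdF w).hasFDerivAt

lemma hasFDerivAt_wGen {n : ℕ} {P : (Fin n → ℂ) → ℂ} (hs : ContDiff ℝ ∞ P)
    (s : ℂ) (k : Fin n) (w : Fin n → ℂ) :
    HasFDerivAt (fun z => wGen s P k z)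
      ((1/2 : ℂ) • (((ContinuousLinearMap.apply ℝ ℂ (Pi.single k 1)).comp
          (fderiv ℝ (fderiv ℝ P) w)) +
        s • ((ContinuousLinearMap.apply ℝ ℂ (Pi.single k Complex.I)).comp
          (fderiv ℝ (fderiv ℝ P) w)))) w :=
  ((H1 hs w (Pi.single k 1)).add ((H1 hs w (Pi.single k Complex.I)).const_mul s)).const_mul
    (1/2 : ℂ)

lemma wGen_wGen {n : ℕ} {P : (Fin n → ℂ) → ℂ} (hs : ContDiff ℝ ∞ P)
    (s₁ s₂ : ℂ) (j k : Fin n) (w : Fin n → ℂ) :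
    wGen s₁ (fun z => wGen s₂ P k z) j w =
      (1/4 : ℂ) * (D2 P w (Pi.single j 1) (Pi.single k 1)
        + s₂ * D2 P w (Pi.single j 1) (Pi.single k Complex.I)
        + s₁ * D2 P w (Pi.single j Complex.I) (Pi.single k 1)
        + s₁ * s₂ * D2 P w (Pi.single j Complex.I) (Pi.single k Complex.I)) := by
  have hfd := (hasFDerivAt_wGen hs s₂ k w).fderiv
  show (1/2 : ℂ) * (fderiv ℝ (fun z => wGen s₂ P k z) w (Pi.single j 1)
      + s₁ * fderiv ℝ (fun z => wGen s₂ P k z) w (Pi.single j Complex.I)) = _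
  rw [hfd]
  simp only [ContinuousLinearMap.smul_apply, ContinuousLinearMap.add_apply,
    ContinuousLinearMap.comp_apply, ContinuousLinearMap.apply_apply, D2, smul_eq_mul]
  ring

lemma realHessian_clm {n : ℕ} {P : (Fin n → ℂ) → ℂ} (hs : ContDiff ℝ ∞ P)
    (φ : ℂ →L[ℝ] ℝ) (w : Fin n → ℂ) (a b : Fin n ⊕ Fin n) :
    realHessian (fun z => φ (P z)) w a b = φ (D2 P w (dirC a) (dirC b)) := by
  have hd : Differentiable ℝ P := hs.differentiable (by simp)
  have step1 : (fun z => fderiv ℝ (fun z' => φ (P z')) z (dirC b))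
      = fun z => φ (fderiv ℝ P z (dirC b)) := by
    funext z
    have h := (φ.hasFDerivAt.comp z (hd z).hasFDerivAt).fderiv
    simp only [Function.comp_def] at h
    rw [h]
    rfl
  show fderiv ℝ (fun z => fderiv ℝ (fun z' => φ (P z')) z (dirC b)) w (dirC a) = _
  have h := (φ.hasFDerivAt.comp w (H1 hs w (dirC b))).fderiv
  simp only [Function.comp_def] at h
  rw [step1, h]
  rfl

def idx {n : ℕ} : Fin n ⊕ Fin n → Fin n := Sum.elim id id
def sgn {n : ℕ} : Fin n ⊕ Fin n → ℂ := Sum.elim (fun _ => -Complex.I) (fun _ => Complex.I)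

def Tmat (n : ℕ) : Matrix (Fin n ⊕ Fin n) (Fin n ⊕ Fin n) ℂ :=
  Matrix.of fun a a' => Sum.elim (fun k => if k = idx a then (1/2 : ℂ) else 0)
    (fun k => if k = idx a then sgn a / 2 else 0) a'

lemma sum_T {n : ℕ} (a : Fin n ⊕ Fin n) (g : Fin n ⊕ Fin n → ℂ) :
    ∑ a', Tmat n a a' * g a'
      = (1/2 : ℂ) * g (Sum.inl (idx a)) + (sgn a / 2) * g (Sum.inr (idx a)) := by
  rw [Fintype.sum_sum_type]
  simp [Tmat, ite_mul, Finset.sum_ite_eq']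

lemma TCT {n : ℕ} (M : Matrix (Fin n ⊕ Fin n) (Fin n ⊕ Fin n) ℂ) (a b : Fin n ⊕ Fin n) :
    (Tmat n * M * (Tmat n)ᵀ) a b
      = (1/2 : ℂ) * ((1/2 : ℂ) * M (Sum.inl (idx a)) (Sum.inl (idx b))
          + (sgn a/2) * M (Sum.inr (idx a)) (Sum.inl (idx b)))
      + (sgn b/2) * ((1/2 : ℂ) * M (Sum.inl (idx a)) (Sum.inr (idx b))
          + (sgn a/2) * M (Sum.inr (idx a)) (Sum.inr (idx b))) := by
  have hTM : ∀ b', (Tmat n * M) a b'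
      = (1/2 : ℂ) * M (Sum.inl (idx a)) b' + (sgn a/2) * M (Sum.inr (idx a)) b' :=
    fun b' => by rw [Matrix.mul_apply]; exact sum_T a fun a' => M a' b'
  rw [Matrix.mul_apply]
  calc ∑ b', (Tmat n * M) a b' * (Tmat n)ᵀ b' b
      = ∑ b', Tmat n b b' * ((1/2 : ℂ) * M (Sum.inl (idx a)) b'
          + (sgn a/2) * M (Sum.inr (idx a)) b') := by
        simp only [Matrix.transpose_apply, hTM]
        exact Finset.sum_congr rfl fun _ _ => mul_comm _ _
    _ = _ := sum_T b _

lemma mixed_factor {n : ℕ} {P : (Fin n → ℂ) → ℂ} (hs : ContDiff ℝ ∞ P) (w : Fin n → ℂ) :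
    mixedHessian P w
      = Tmat n * (Matrix.of fun a b => D2 P w (dirC a) (dirC b)) * (Tmat n)ᵀ := by
  ext a b
  rw [TCT]
  have hwD : ∀ k : Fin n, (fun z => wD P k z) = fun z => wGen (-Complex.I) P k z :=
    fun k => funext fun z => wD_eq_wGen P k z
  have hwDbar : ∀ k : Fin n, (fun z => wDbar P k z) = fun z => wGen Complex.I P k z :=
    fun k => funext fun z => wDbar_eq_wGen P k z
  cases a with
  | inl j =>
    cases b with
    | inl k =>
      show wD (fun z => wD P k z) j w = _
      rw [hwD k, wD_eq_wGen, wGen_wGen hs]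
      simp only [idx, sgn, dirC, Sum.elim_inl, Matrix.of_apply, id]
      ring
    | inr k =>
      show wD (fun z => wDbar P k z) j w = _
      rw [hwDbar k, wD_eq_wGen, wGen_wGen hs]
      simp only [idx, sgn, dirC, Sum.elim_inl, Sum.elim_inr, Matrix.of_apply, id]
      ring
  | inr j =>
    cases b with
    | inl k =>
      show wDbar (fun z => wD P k z) j w = _
      rw [hwD k, wDbar_eq_wGen, wGen_wGen hs]
      simp only [idx, sgn, dirC, Sum.elim_inl, Sum.elim_inr, Matrix.of_apply, id]
      ring
    | inr k =>
      show wDbar (fun z => wDbar P k z) j w = _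
      rw [hwDbar k, wDbar_eq_wGen, wGen_wGen hs]
      simp only [idx, sgn, dirC, Sum.elim_inr, Matrix.of_apply, id]
      ring

lemma det_ne_zero_of_rank_eq_card {m : Type} [Fintype m] [DecidableEq m]
    (M : Matrix m m ℂ) (h : M.rank = Fintype.card m) : M.det ≠ 0 := by
  intro hdet
  obtain ⟨v, hv, hMv⟩ := (Matrix.exists_mulVec_eq_zero_iff).mpr hdet
  have h1 := LinearMap.finrank_range_add_finrank_ker M.mulVecLin
  have h2 : M.rank = Module.finrank ℂ (LinearMap.range M.mulVecLin) := rfl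
  have h3 : Module.finrank ℂ (m → ℂ) = Fintype.card m :=
    Module.finrank_fintype_fun_eq_card ℂ
  have h4 : 0 < Module.finrank ℂ (LinearMap.ker M.mulVecLin) := by
    refine Module.finrank_pos_iff.mpr ?_
    refine nontrivial_of_ne ⟨v, ?_⟩ 0 ?_
    · simpa [Matrix.mulVecLin_apply] using hMv
    · simp [Subtype.ext_iff, hv]
  omega

set_option maxRecDepth 8000 in
/-- If the mixed Hessian of `P` at `w` has full rank `2n`, then some real linear
combination `H_ℝ(Re P)(w) + u₀·H_ℝ(Im P)(w)` is nonsingular. -/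
theorem stmt_7 (n : ℕ) (P : (Fin n → ℂ) → ℂ) (hP : IsMixedPoly P) (w : Fin n → ℂ)
    (hrank : (mixedHessian P w).rank = 2 * n) :
    ∃ u₀ : ℝ,
      (realHessian (fun z => (P z).re) w +
        u₀ • realHessian (fun z => (P z).im) w).det ≠ 0 := by
  have hs := isMixedPoly_contDiff hP
  set A := realHessian (fun z => (P z).re) w with hAdef
  set B := realHessian (fun z => (P z).im) w with hBdef
  set Cm : Matrix (Fin n ⊕ Fin n) (Fin n ⊕ Fin n) ℂ :=
    Matrix.of fun a b => D2 P w (dirC a) (dirC b) with hCmdef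
  have hA : ∀ a b, A a b = (D2 P w (dirC a) (dirC b)).re := by
    intro a b
    rw [hAdef]
    have := realHessian_clm hs Complex.reCLM w a b
    simpa using this
  have hB : ∀ a b, B a b = (D2 P w (dirC a) (dirC b)).im := by
    intro a b
    rw [hBdef]
    have := realHessian_clm hs Complex.imCLM w a b
    simpa using this
  have hC : ∀ a b, Cm a b = (A a b : ℂ) + (B a b : ℂ) * Complex.I := by
    intro a b
    rw [hA, hB]
    exact (Complex.re_add_im _).symm
  have hrankC : Cm.rank = Fintype.card (Fin n ⊕ Fin n) := by
    have hfac := mixed_factor hs w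
    have hle : (mixedHessian P w).rank ≤ Cm.rank := by
      rw [hfac]
      exact (Matrix.rank_mul_le_left _ _).trans (Matrix.rank_mul_le_right _ _)
    have hle2 : Cm.rank ≤ Fintype.card (Fin n ⊕ Fin n) := Matrix.rank_le_card_width Cm
    have hcard : Fintype.card (Fin n ⊕ Fin n) = 2 * n := by simp [two_mul]
    omega
  have hdetC : Cm.det ≠ 0 := det_ne_zero_of_rank_eq_card _ hrankC
  by_contra h
  push_neg at h
  set M : Matrix (Fin n ⊕ Fin n) (Fin n ⊕ Fin n) (Polynomial ℝ) :=
    Matrix.of fun a b => Polynomial.C (A a b) + Polynomial.X * Polynomial.C (B a b) with hMdef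
  have hev : ∀ u : ℝ, Polynomial.eval u M.det = (A + u • B).det := by
    intro u
    have h1 := RingHom.map_det (Polynomial.evalRingHom u) M
    have h2 : (Polynomial.evalRingHom u).mapMatrix M = A + u • B := by
      ext a b
      simp only [hMdef, RingHom.mapMatrix_apply, Matrix.map_apply, Matrix.of_apply,
        Matrix.add_apply, Matrix.smul_apply, smul_eq_mul, Polynomial.eval_add,
        Polynomial.eval_C, Polynomial.eval_mul, Polynomial.eval_X,
        Polynomial.coe_evalRingHom]
    rw [← h2]
    exact h1
  have hM0 : M.det = 0 := Polynomial.funext fun u => by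
    rw [hev u, h u, Polynomial.eval_zero]
  have hpsi : ((Polynomial.evalRingHom Complex.I).comp
      (Polynomial.mapRingHom (algebraMap ℝ ℂ))) M.det = Cm.det := by
    rw [RingHom.map_det]
    congr 1
    ext a b
    rw [hC]
    simp only [hMdef, RingHom.mapMatrix_apply, Matrix.map_apply, Matrix.of_apply,
      RingHom.coe_comp, Function.comp_apply, Polynomial.coe_mapRingHom,
      Polynomial.map_add, Polynomial.map_mul, Polynomial.map_C, Polynomial.map_X,
      Polynomial.coe_evalRingHom, Polynomial.eval_add, Polynomial.eval_mul,
      Polynomial.eval_C, Polynomial.eval_X, Complex.coe_algebraMap]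
    ring
  rw [hM0, map_zero] at hpsi
  exact hdetC hpsi.symm

end
end

section
/- Let p, q, n be positive integers with q ≥ p and let g ∈ ℂ[z_1,z_2] be a convenient weighted homogeneous complex polynomial (g(c^q z_1, c^p z_2) = c^{pqn}·g(z_1,z_2) for all c ∈ ℂ∖{0}) with an isolated singularity at the origin. Suppose g is not of the form β_1 z_1 + β_2 z_2^k. Then det H_ℂ(g) := (∂²g/∂z_1∂z_1)·(∂²g/∂z_2∂z_2) − (∂²g/∂z_1∂z_2)·(∂²g/∂z_2∂z_1) is not the zero polynomial. -/
open MvPolynomial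

namespace Stmt8Aux

noncomputable section
variable (p q : ℕ)

/-- weighted degree of a monomial -/
def W (m : Fin 2 →₀ ℕ) : ℕ := q * m 0 + p * m 1

/-- weighted homogeneity -/
def Homog (e : ℕ) (f : MvPolynomial (Fin 2) ℂ) : Prop :=
  ∀ m, coeff m f ≠ 0 → W p q m = e

variable {p q}

lemma finsupp_ext {m m' : Fin 2 →₀ ℕ} (h0 : m 0 = m' 0) (h1 : m 1 = m' 1) : m = m' := by
  ext i; fin_cases i <;> assumption

lemma single_decomp (m : Fin 2 →₀ ℕ) :
    m = Finsupp.single 0 (m 0) + Finsupp.single 1 (m 1) := by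
  apply finsupp_ext <;> simp

lemma W_add (a b : Fin 2 →₀ ℕ) : W p q (a + b) = W p q a + W p q b := by
  simp [W, Finsupp.add_apply]; ring

lemma sub_single_add {m : Fin 2 →₀ ℕ} {i : Fin 2} (h : m i ≠ 0) :
    m - Finsupp.single i 1 + Finsupp.single i 1 = m := by
  ext j
  by_cases hj : j = i
  · subst hj
    simp only [Finsupp.add_apply, Finsupp.tsub_apply, Finsupp.single_eq_same]
    omega
  · simp [Finsupp.add_apply, Finsupp.tsub_apply, Finsupp.single_apply,
      Ne.symm hj]

lemma coeff_pderiv (i : Fin 2) (f : MvPolynomial (Fin 2) ℂ) (m : Fin 2 →₀ ℕ) :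
    coeff m (pderiv i f) = ((m i : ℂ) + 1) * coeff (m + Finsupp.single i 1) f := by
  induction f using MvPolynomial.induction_on' with
  | monomial s a =>
    rw [pderiv_monomial, coeff_monomial, coeff_monomial]
    by_cases hsi : s i = 0
    · rw [hsi]
      have hne : ¬ s = m + Finsupp.single i 1 := by
        intro h
        have : s i = m i + 1 := by simp [h, Finsupp.add_apply]
        omega
      rw [if_neg hne]
      simp
    · have hiff : s - Finsupp.single i 1 = m ↔ s = m + Finsupp.single i 1 := by
        constructor
        · intro h
          rw [← h, sub_single_add hsi]
        · intro h
          subst h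
          ext j
          by_cases hj : j = i
          · subst hj; simp [Finsupp.add_apply, Finsupp.tsub_apply, Finsupp.single_apply]
          · simp [Finsupp.add_apply, Finsupp.tsub_apply, Finsupp.single_apply, Ne.symm hj]
      by_cases h : s = m + Finsupp.single i 1
      · rw [if_pos (hiff.mpr h), if_pos h]
        have : s i = m i + 1 := by simp [h, Finsupp.add_apply, Finsupp.single_apply]
        rw [this]
        push_cast
        ring
      · rw [if_neg (fun hh => h (hiff.mp hh)), if_neg h, mul_zero]
  | add f g hf hg =>
    simp [map_add, coeff_add, hf, hg]; ring

lemma coeff_X_mul_pderiv (i : Fin 2) (f : MvPolynomial (Fin 2) ℂ) (m : Fin 2 →₀ ℕ) :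
    coeff m (X i * pderiv i f) = (m i : ℂ) * coeff m f := by
  rw [mul_comm, coeff_mul_X']
  by_cases h : m i = 0
  · rw [if_neg (by simp [Finsupp.mem_support_iff, h]), h]
    simp
  · rw [if_pos (by simp [Finsupp.mem_support_iff, h]), coeff_pderiv, sub_single_add h]
    have h1 : (m - Finsupp.single i 1 : Fin 2 →₀ ℕ) i = m i - 1 := by
      simp [Finsupp.tsub_apply]
    rw [h1]
    congr 1
    have : (m i - 1) + 1 = m i := by omega
    exact_mod_cast congrArg (Nat.cast (R := ℂ)) this

lemma euler {e : ℕ} {f : MvPolynomial (Fin 2) ℂ} (hf : Homog p q e f) :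
    C (q : ℂ) * (X 0 * pderiv 0 f) + C (p : ℂ) * (X 1 * pderiv 1 f) = C (e : ℂ) * f := by
  ext m
  simp only [coeff_add, coeff_C_mul, coeff_X_mul_pderiv]
  by_cases hm : coeff m f = 0
  · simp [hm]
  · have h := hf m hm
    rw [← h]
    simp only [W]
    push_cast
    ring

lemma W_single0 : W p q (Finsupp.single 0 1) = q := by
  simp [W, Finsupp.single_apply]

lemma W_single1 : W p q (Finsupp.single 1 1) = p := by
  simp [W, Finsupp.single_apply]

lemma homog_pderiv0 {e : ℕ} {f : MvPolynomial (Fin 2) ℂ} (hf : Homog p q e f)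
    {m : Fin 2 →₀ ℕ} (h : coeff m (pderiv 0 f) ≠ 0) : W p q m + q = e := by
  rw [coeff_pderiv] at h
  have h2 : coeff (m + Finsupp.single 0 1) f ≠ 0 := fun hh => h (by rw [hh, mul_zero])
  have := hf _ h2
  rw [W_add, W_single0] at this
  omega

lemma homog_pderiv1 {e : ℕ} {f : MvPolynomial (Fin 2) ℂ} (hf : Homog p q e f)
    {m : Fin 2 →₀ ℕ} (h : coeff m (pderiv 1 f) ≠ 0) : W p q m + p = e := by
  rw [coeff_pderiv] at h
  have h2 : coeff (m + Finsupp.single 1 1) f ≠ 0 := fun hh => h (by rw [hh, mul_zero])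
  have := hf _ h2
  rw [W_add, W_single1] at this
  omega

lemma pderiv_comm' (f : MvPolynomial (Fin 2) ℂ) :
    pderiv 0 (pderiv 1 f) = pderiv 1 (pderiv 0 f) := by
  ext m
  rw [coeff_pderiv, coeff_pderiv, coeff_pderiv, coeff_pderiv]
  rw [show m + Finsupp.single 0 1 + Finsupp.single 1 1
      = m + Finsupp.single 1 1 + Finsupp.single 0 1 by rw [add_right_comm]]
  have e1 : (m + Finsupp.single 0 1 : Fin 2 →₀ ℕ) 1 = m 1 := by
    simp [Finsupp.add_apply]
  have e0 : (m + Finsupp.single 1 1 : Fin 2 →₀ ℕ) 0 = m 0 := by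
    simp [Finsupp.add_apply]
  rw [e1, e0]
  ring

lemma eval_scale {e : ℕ} {f : MvPolynomial (Fin 2) ℂ} (hf : Homog p q e f)
    (c : ℂ) (z : Fin 2 → ℂ) :
    eval ![c ^ q * z 0, c ^ p * z 1] f = c ^ e * eval z f := by
  rw [eval_eq', eval_eq', Finset.mul_sum]
  apply Finset.sum_congr rfl
  intro m hm
  have hW := hf m (mem_support_iff.mp hm)
  rw [Fin.prod_univ_two, Fin.prod_univ_two]
  simp only [Matrix.cons_val_zero, Matrix.cons_val_one, Matrix.head_cons]
  rw [← hW]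
  simp only [W]
  ring

variable (p q) in
/-- weighted-homogeneous component of weight `j` -/
def Fpart (j : ℕ) (f : MvPolynomial (Fin 2) ℂ) : MvPolynomial (Fin 2) ℂ :=
  ∑ m ∈ f.support.filter (fun m => W p q m = j), monomial m (coeff m f)

lemma coeff_Fpart (j : ℕ) (f : MvPolynomial (Fin 2) ℂ) (m : Fin 2 →₀ ℕ) :
    coeff m (Fpart p q j f) = if W p q m = j then coeff m f else 0 := by
  rw [Fpart]
  rw [coeff_sum]
  rw [Finset.sum_congr rfl (fun m' _ => coeff_monomial m m' (coeff m' f))]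
  rw [Finset.sum_ite_eq']
  by_cases h1 : W p q m = j
  · by_cases h2 : coeff m f = 0
    · split_ifs <;> simp [h2]
    · rw [if_pos (Finset.mem_filter.mpr ⟨mem_support_iff.mpr h2, h1⟩), if_pos h1]
  · have hnm : m ∉ Finset.filter (fun m => W p q m = j) f.support :=
      fun hmem => h1 (Finset.mem_filter.mp hmem).2
    rw [if_neg hnm, if_neg h1]

lemma prod_min {f u : MvPolynomial (Fin 2) ℂ} {mf mu : Fin 2 →₀ ℕ}
    (hmf : coeff mf f ≠ 0) (hmu : coeff mu u ≠ 0)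
    (hminf : ∀ m, coeff m f ≠ 0 → W p q mf ≤ W p q m)
    (hminu : ∀ m, coeff m u ≠ 0 → W p q mu ≤ W p q m) :
    ∃ n, coeff n (f * u) ≠ 0 ∧ W p q n = W p q mf + W p q mu := by
  classical
  set j := W p q mf with hj
  set k := W p q mu with hk
  have hfj : Fpart p q j f ≠ 0 :=
    ne_zero_iff.mpr ⟨mf, by rw [coeff_Fpart, if_pos rfl]; exact hmf⟩
  have huk : Fpart p q k u ≠ 0 :=
    ne_zero_iff.mpr ⟨mu, by rw [coeff_Fpart, if_pos rfl]; exact hmu⟩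
  obtain ⟨nn, hnn⟩ := ne_zero_iff.mp (mul_ne_zero hfj huk)
  rw [coeff_mul] at hnn
  obtain ⟨x, hxmem, hxne⟩ := Finset.exists_ne_zero_of_sum_ne_zero hnn
  have hxsum : x.1 + x.2 = nn := Finset.HasAntidiagonal.mem_antidiagonal.mp hxmem
  have hx1 : coeff x.1 (Fpart p q j f) ≠ 0 := fun h => hxne (by rw [h, zero_mul])
  have hx2 : coeff x.2 (Fpart p q k u) ≠ 0 := fun h => hxne (by rw [h, mul_zero])
  rw [coeff_Fpart] at hx1 hx2
  have hW1 : W p q x.1 = j := by by_contra h; rw [if_neg h] at hx1; exact hx1 rfl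
  have hW2 : W p q x.2 = k := by by_contra h; rw [if_neg h] at hx2; exact hx2 rfl
  rw [if_pos hW1] at hx1
  rw [if_pos hW2] at hx2
  have hWnn : W p q nn = j + k := by rw [← hxsum, W_add, hW1, hW2]
  refine ⟨nn, ?_, hWnn⟩
  have key : coeff nn (f * u) = coeff nn (Fpart p q j f * Fpart p q k u) := by
    rw [coeff_mul, coeff_mul]
    apply Finset.sum_congr rfl
    intro y hy
    have hysum : y.1 + y.2 = nn := Finset.HasAntidiagonal.mem_antidiagonal.mp hy
    by_cases h1 : coeff y.1 f = 0
    · rw [h1, coeff_Fpart]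
      split_ifs <;> simp [h1]
    by_cases h2 : coeff y.2 u = 0
    · rw [h2, coeff_Fpart, coeff_Fpart]
      split_ifs <;> simp [h2]
    have hy1 : j ≤ W p q y.1 := hminf _ h1
    have hy2 : k ≤ W p q y.2 := hminu _ h2
    have hys : W p q y.1 + W p q y.2 = j + k := by rw [← W_add, hysum, hWnn]
    have hy1' : W p q y.1 = j := by omega
    have hy2' : W p q y.2 = k := by omega
    rw [coeff_Fpart, coeff_Fpart, if_pos hy1', if_pos hy2']
  rw [key]
  rw [coeff_mul]
  exact hnn

lemma prod_max {f u : MvPolynomial (Fin 2) ℂ} {mf mu : Fin 2 →₀ ℕ}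
    (hmf : coeff mf f ≠ 0) (hmu : coeff mu u ≠ 0)
    (hmaxf : ∀ m, coeff m f ≠ 0 → W p q m ≤ W p q mf)
    (hmaxu : ∀ m, coeff m u ≠ 0 → W p q m ≤ W p q mu) :
    ∃ n, coeff n (f * u) ≠ 0 ∧ W p q n = W p q mf + W p q mu := by
  classical
  set j := W p q mf with hj
  set k := W p q mu with hk
  have hfj : Fpart p q j f ≠ 0 :=
    ne_zero_iff.mpr ⟨mf, by rw [coeff_Fpart, if_pos rfl]; exact hmf⟩
  have huk : Fpart p q k u ≠ 0 :=
    ne_zero_iff.mpr ⟨mu, by rw [coeff_Fpart, if_pos rfl]; exact hmu⟩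
  obtain ⟨nn, hnn⟩ := ne_zero_iff.mp (mul_ne_zero hfj huk)
  rw [coeff_mul] at hnn
  obtain ⟨x, hxmem, hxne⟩ := Finset.exists_ne_zero_of_sum_ne_zero hnn
  have hxsum : x.1 + x.2 = nn := Finset.HasAntidiagonal.mem_antidiagonal.mp hxmem
  have hx1 : coeff x.1 (Fpart p q j f) ≠ 0 := fun h => hxne (by rw [h, zero_mul])
  have hx2 : coeff x.2 (Fpart p q k u) ≠ 0 := fun h => hxne (by rw [h, mul_zero])
  rw [coeff_Fpart] at hx1 hx2
  have hW1 : W p q x.1 = j := by by_contra h; rw [if_neg h] at hx1; exact hx1 rfl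
  have hW2 : W p q x.2 = k := by by_contra h; rw [if_neg h] at hx2; exact hx2 rfl
  rw [if_pos hW1] at hx1
  rw [if_pos hW2] at hx2
  have hWnn : W p q nn = j + k := by rw [← hxsum, W_add, hW1, hW2]
  refine ⟨nn, ?_, hWnn⟩
  have key : coeff nn (f * u) = coeff nn (Fpart p q j f * Fpart p q k u) := by
    rw [coeff_mul, coeff_mul]
    apply Finset.sum_congr rfl
    intro y hy
    have hysum : y.1 + y.2 = nn := Finset.HasAntidiagonal.mem_antidiagonal.mp hy
    by_cases h1 : coeff y.1 f = 0
    · rw [h1, coeff_Fpart]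
      split_ifs <;> simp [h1]
    by_cases h2 : coeff y.2 u = 0
    · rw [h2, coeff_Fpart, coeff_Fpart]
      split_ifs <;> simp [h2]
    have hy1 : W p q y.1 ≤ j := hmaxf _ h1
    have hy2 : W p q y.2 ≤ k := hmaxu _ h2
    have hys : W p q y.1 + W p q y.2 = j + k := by rw [← W_add, hysum, hWnn]
    have hy1' : W p q y.1 = j := by omega
    have hy2' : W p q y.2 = k := by omega
    rw [coeff_Fpart, coeff_Fpart, if_pos hy1', if_pos hy2']
  rw [key]
  rw [coeff_mul]
  exact hnn

/-- any nonzero multiple of a nonzero `e`-homogeneous polynomial has a monomial of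
weight at least `e` -/
lemma dvd_homog_bound {e : ℕ} {f a : MvPolynomial (Fin 2) ℂ} (hf : Homog p q e f)
    (hf0 : f ≠ 0) (hdvd : f ∣ a) (ha : a ≠ 0) :
    ∃ nn, coeff nn a ≠ 0 ∧ e ≤ W p q nn := by
  obtain ⟨u, rfl⟩ := hdvd
  have hu : u ≠ 0 := fun h => ha (by rw [h, mul_zero])
  obtain ⟨mf, hmf⟩ := ne_zero_iff.mp hf0
  obtain ⟨mu0, hmu0⟩ := ne_zero_iff.mp hu
  obtain ⟨mu, hmumem, hmumin⟩ := Finset.exists_min_image u.support (W p q)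
    ⟨mu0, mem_support_iff.mpr hmu0⟩
  have hminf : ∀ m, coeff m f ≠ 0 → W p q mf ≤ W p q m := fun m hm => by
    rw [hf m hm, hf mf hmf]
  have hminu : ∀ m, coeff m u ≠ 0 → W p q mu ≤ W p q m := fun m hm =>
    hmumin m (mem_support_iff.mpr hm)
  obtain ⟨nn, hnn, hWnn⟩ := prod_min hmf (mem_support_iff.mp hmumem) hminf hminu
  refine ⟨nn, hnn, ?_⟩
  rw [hWnn, hf mf hmf]
  omega

/-- a divisor of a weighted homogeneous polynomial is weighted homogeneous -/
lemma homog_of_dvd {e : ℕ} {f g1 : MvPolynomial (Fin 2) ℂ} (hg : Homog p q e g1)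
    (hg0 : g1 ≠ 0) (hdvd : f ∣ g1) : ∃ j, Homog p q j f := by
  obtain ⟨u, hu⟩ := hdvd
  have hf0 : f ≠ 0 := fun h => hg0 (by rw [hu, h, zero_mul])
  have hu0 : u ≠ 0 := fun h => hg0 (by rw [hu, h, mul_zero])
  obtain ⟨mf0, hmf0⟩ := ne_zero_iff.mp hf0
  obtain ⟨mu0, hmu0⟩ := ne_zero_iff.mp hu0
  obtain ⟨mfa, hmfamem, hmfamin⟩ := Finset.exists_min_image f.support (W p q)
    ⟨mf0, mem_support_iff.mpr hmf0⟩
  obtain ⟨mua, hmuamem, hmuamin⟩ := Finset.exists_min_image u.support (W p q)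
    ⟨mu0, mem_support_iff.mpr hmu0⟩
  obtain ⟨mfb, hmfbmem, hmfbmax⟩ := Finset.exists_max_image f.support (W p q)
    ⟨mf0, mem_support_iff.mpr hmf0⟩
  obtain ⟨mub, hmubmem, hmubmax⟩ := Finset.exists_max_image u.support (W p q)
    ⟨mu0, mem_support_iff.mpr hmu0⟩
  obtain ⟨n1, hn1, hWn1⟩ := prod_min (mem_support_iff.mp hmfamem)
    (mem_support_iff.mp hmuamem)
    (fun m hm => hmfamin m (mem_support_iff.mpr hm))
    (fun m hm => hmuamin m (mem_support_iff.mpr hm))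
  obtain ⟨n2, hn2, hWn2⟩ := prod_max (mem_support_iff.mp hmfbmem)
    (mem_support_iff.mp hmubmem)
    (fun m hm => hmfbmax m (mem_support_iff.mpr hm))
    (fun m hm => hmubmax m (mem_support_iff.mpr hm))
  rw [← hu] at hn1 hn2
  have he1 : W p q mfa + W p q mua = e := by rw [← hWn1]; exact hg n1 hn1
  have he2 : W p q mfb + W p q mub = e := by rw [← hWn2]; exact hg n2 hn2
  have hle1 : W p q mfa ≤ W p q mfb := hmfamin mfb hmfbmem
  have hle2 : W p q mua ≤ W p q mub := hmuamin mub hmubmem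
  have heq : W p q mfa = W p q mfb := by omega
  refine ⟨W p q mfa, fun m hm => ?_⟩
  have h1 := hmfamin m (mem_support_iff.mpr hm)
  have h2 := hmfbmax m (mem_support_iff.mpr hm)
  omega

lemma isUnit_of_homog_zero (hp : 0 < p) (hq : 0 < q) {f : MvPolynomial (Fin 2) ℂ}
    (hf : Homog p q 0 f) (h0 : f ≠ 0) : IsUnit f := by
  have hm0 : ∀ m, coeff m f ≠ 0 → m = 0 := by
    intro m hm
    have := hf m hm
    simp only [W] at this
    have h1 : m 0 = 0 := by
      rcases Nat.mul_eq_zero.mp (by omega : q * m 0 = 0) with h | h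
      · omega
      · exact h
    have h2 : m 1 = 0 := by
      rcases Nat.mul_eq_zero.mp (by omega : p * m 1 = 0) with h | h
      · omega
      · exact h
    apply finsupp_ext <;> simp [h1, h2]
  have hfC : f = C (coeff 0 f) := by
    ext m
    by_cases hm : m = 0
    · subst hm; simp [coeff_C]
    · rw [coeff_C, if_neg (fun h => hm h.symm)]
      by_contra h
      exact hm (hm0 m h)
  have hc : coeff 0 f ≠ 0 := fun h => h0 (by rw [hfC, h, map_zero])
  rw [hfC]
  exact (isUnit_iff_ne_zero.mpr hc).map C

lemma eval_aeval_poly (v : Fin 2 → Polynomial ℂ) (f : MvPolynomial (Fin 2) ℂ) (x : ℂ) :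
    Polynomial.eval x (MvPolynomial.aeval v f) = MvPolynomial.eval (fun i => (v i).eval x) f := by
  induction f using MvPolynomial.induction_on with
  | C a => simp
  | add f g hf hg => rw [map_add, Polynomial.eval_add, hf, hg, map_add]
  | mul_X f i hf => rw [map_mul, Polynomial.eval_mul, hf, aeval_X, map_mul, eval_X]

lemma eval_aeval_mv (v : Fin 2 → MvPolynomial (Fin 2) ℂ) (f : MvPolynomial (Fin 2) ℂ)
    (z : Fin 2 → ℂ) :
    eval z (MvPolynomial.aeval v f) = eval (fun i => eval z (v i)) f := by
  induction f using MvPolynomial.induction_on with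
  | C a => simp
  | add f g hf hg => rw [map_add, map_add, hf, hg, map_add]
  | mul_X f i hf => rw [map_mul, map_mul, hf, aeval_X, map_mul, eval_X]

/-- A positive-weight homogeneous polynomial has a nonzero root. -/
lemma exists_nonzero_root (hp : 0 < p) (hq : 0 < q) {j : ℕ} {f : MvPolynomial (Fin 2) ℂ}
    (hf : Homog p q j f) (hj : 0 < j) (h0 : f ≠ 0) :
    ∃ w : Fin 2 → ℂ, w ≠ 0 ∧ eval w f = 0 := by
  classical
  by_cases hall0 : ∀ m ∈ f.support, m 0 ≠ 0
  · refine ⟨![0, 1], ?_, ?_⟩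
    · intro h
      have := congrFun h 1
      simp at this
    · rw [eval_eq']
      apply Finset.sum_eq_zero
      intro m hm
      rw [Fin.prod_univ_two]
      simp only [Matrix.cons_val_zero, Matrix.cons_val_one, Matrix.head_cons]
      rw [zero_pow (hall0 m hm), one_pow]
      ring
  push_neg at hall0
  obtain ⟨ma, hmamem, hma0⟩ := hall0
  by_cases hall1 : ∀ m ∈ f.support, m 1 ≠ 0
  · refine ⟨![1, 0], ?_, ?_⟩
    · intro h
      have := congrFun h 0
      simp at this
    · rw [eval_eq']
      apply Finset.sum_eq_zero
      intro m hm
      rw [Fin.prod_univ_two]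
      simp only [Matrix.cons_val_zero, Matrix.cons_val_one, Matrix.head_cons]
      rw [zero_pow (hall1 m hm), one_pow]
      ring
  push_neg at hall1
  obtain ⟨mb, hmbmem, hmb1⟩ := hall1
  -- mb has mb 1 = 0 and mb 0 > 0
  have hmb0 : 0 < mb 0 := by
    have := hf mb (mem_support_iff.mp hmbmem)
    simp only [W, hmb1, mul_zero, add_zero] at this
    rcases Nat.eq_zero_or_pos (mb 0) with h | h
    · rw [h, mul_zero] at this; omega
    · exact h
  -- the one-variable polynomial f(X, 1)
  set A : Polynomial ℂ := MvPolynomial.aeval ![Polynomial.X, 1] f with hA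
  -- A = ∑_{m ∈ supp f} C (coeff m f) * X ^ (m 0)
  have hAsum : A = ∑ m ∈ f.support, Polynomial.C (coeff m f) * Polynomial.X ^ (m 0) := by
    rw [hA]
    conv_lhs => rw [f.as_sum]
    rw [map_sum]
    apply Finset.sum_congr rfl
    intro m hm
    rw [aeval_monomial]
    rw [Finsupp.prod_fintype _ _ (fun i => pow_zero _)]
    rw [Fin.prod_univ_two]
    simp only [Matrix.cons_val_zero, Matrix.cons_val_one, Matrix.head_cons, one_pow, mul_one]
    rfl
  -- injectivity of m ↦ m 0 on the support
  have hinj : ∀ m ∈ f.support, m 0 = mb 0 → m = mb := by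
    intro m hm h0'
    have h1 := hf m (mem_support_iff.mp hm)
    have h2 := hf mb (mem_support_iff.mp hmbmem)
    simp only [W] at h1 h2
    apply finsupp_ext h0'
    rw [h0'] at h1
    have : p * m 1 = p * mb 1 := by omega
    exact Nat.eq_of_mul_eq_mul_left hp this
  have hcoeffA : A.coeff (mb 0) = coeff mb f := by
    rw [hAsum, Polynomial.finset_sum_coeff]
    rw [Finset.sum_congr rfl (fun m _ => by
      rw [Polynomial.coeff_C_mul, Polynomial.coeff_X_pow])]
    rw [Finset.sum_eq_single mb]
    · simp
    · intro m hm hne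
      rw [if_neg (fun h => hne (hinj m hm h.symm)), mul_zero]
    · intro h
      exact absurd hmbmem h
  have hcoeffA0 : A.coeff (mb 0) ≠ 0 := by
    rw [hcoeffA]; exact mem_support_iff.mp hmbmem
  have hdeg : A.degree ≠ 0 := by
    intro h
    have hle := Polynomial.le_degree_of_ne_zero hcoeffA0
    rw [h] at hle
    have hle' : mb 0 ≤ 0 := by exact_mod_cast hle
    omega
  obtain ⟨a, ha⟩ := IsAlgClosed.exists_root A hdeg
  refine ⟨![a, 1], ?_, ?_⟩
  · intro h
    have := congrFun h 1
    simp at this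
  · have := eval_aeval_poly ![Polynomial.X, 1] f a
    rw [← hA] at this
    have harg : (fun i => (![Polynomial.X, (1 : Polynomial ℂ)] i).eval a) = ![a, 1] := by
      funext i
      fin_cases i <;> simp
    rw [harg] at this
    rw [← this]
    exact ha

lemma coeff_aeval_diag (c0 c1 : ℂ) (f : MvPolynomial (Fin 2) ℂ) (m : Fin 2 →₀ ℕ) :
    coeff m (MvPolynomial.aeval ![C c0 * X 0, C c1 * X 1] f)
      = c0 ^ m 0 * c1 ^ m 1 * coeff m f := by
  classical
  conv_lhs => rw [f.as_sum, map_sum]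
  rw [coeff_sum]
  have hterm : ∀ m' ∈ f.support,
      coeff m (MvPolynomial.aeval ![C c0 * X 0, C c1 * X 1] (monomial m' (coeff m' f)))
        = if m' = m then c0 ^ m' 0 * c1 ^ m' 1 * coeff m' f else 0 := by
    intro m' _
    rw [aeval_monomial, Finsupp.prod_fintype _ _ (fun i => pow_zero _), Fin.prod_univ_two]
    simp only [Matrix.cons_val_zero, Matrix.cons_val_one, Matrix.head_cons]
    rw [show (algebraMap ℂ (MvPolynomial (Fin 2) ℂ)) (coeff m' f) = C (coeff m' f) from rfl]
    rw [mul_pow, mul_pow, ← C_pow, ← C_pow, X_pow_eq_monomial, X_pow_eq_monomial]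
    have hre : (C (coeff m' f) : MvPolynomial (Fin 2) ℂ) * (C (c0 ^ m' 0) * monomial (Finsupp.single 0 (m' 0)) 1 *
        (C (c1 ^ m' 1) * monomial (Finsupp.single 1 (m' 1)) 1)) =
        C (c0 ^ m' 0 * c1 ^ m' 1 * coeff m' f) *
          (monomial (Finsupp.single 0 (m' 0)) 1 * monomial (Finsupp.single 1 (m' 1)) 1) := by
      rw [C_mul, C_mul]; ring
    refine (congrArg (coeff m) hre).trans ?_
    rw [monomial_mul, one_mul, ← single_decomp m', coeff_C_mul, coeff_monomial]
    split_ifs <;> simp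
  rw [Finset.sum_congr rfl hterm, Finset.sum_ite_eq' f.support m
    (fun m' => c0 ^ m' 0 * c1 ^ m' 1 * coeff m' f)]
  by_cases hm : m ∈ f.support
  · rw [if_pos hm]
  · rw [if_neg hm, notMem_support_iff.mp hm, mul_zero]

lemma homog_of_scaling {d : ℕ} {g : MvPolynomial (Fin 2) ℂ}
    (h : ∀ z : Fin 2 → ℂ, eval ![(2:ℂ) ^ q * z 0, (2:ℂ) ^ p * z 1] g = (2:ℂ) ^ d * eval z g) :
    Homog p q d g := by
  have key : MvPolynomial.aeval ![C ((2:ℂ)^q) * X 0, C ((2:ℂ)^p) * X 1] g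
      = C ((2:ℂ)^d) * g := by
    apply MvPolynomial.funext
    intro z
    rw [eval_aeval_mv]
    have harg : (fun i => eval z (![C ((2:ℂ)^q) * X 0, C ((2:ℂ)^p) * X 1] i))
        = ![(2:ℂ)^q * z 0, (2:ℂ)^p * z 1] := by
      funext i; fin_cases i <;> simp
    rw [harg, h z, map_mul, eval_C]
  intro m hm
  have hco := congrArg (coeff m) key
  rw [coeff_aeval_diag, coeff_C_mul] at hco
  have hcan := mul_right_cancel₀ hm hco
  rw [← pow_mul, ← pow_mul, ← pow_add] at hcan
  have hnat : (2:ℕ) ^ (q * m 0 + p * m 1) = 2 ^ d := by exact_mod_cast hcan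
  exact Nat.pow_right_injective le_rfl hnat

lemma exists_m1_eq_zero {g : MvPolynomial (Fin 2) ℂ}
    (h : MvPolynomial.aeval ![Polynomial.X, (0 : Polynomial ℂ)] g ≠ 0) :
    ∃ m, coeff m g ≠ 0 ∧ m 1 = 0 := by
  by_contra hc
  push_neg at hc
  apply h
  conv_lhs => rw [g.as_sum, map_sum]
  apply Finset.sum_eq_zero
  intro m hm
  rw [aeval_monomial, Finsupp.prod_fintype _ _ (fun i => pow_zero _), Fin.prod_univ_two]
  simp only [Matrix.cons_val_zero, Matrix.cons_val_one, Matrix.head_cons]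
  rw [zero_pow (hc m (mem_support_iff.mp hm)), mul_zero, mul_zero]

lemma exists_m0_eq_zero {g : MvPolynomial (Fin 2) ℂ}
    (h : MvPolynomial.aeval ![(0 : Polynomial ℂ), Polynomial.X] g ≠ 0) :
    ∃ m, coeff m g ≠ 0 ∧ m 0 = 0 := by
  by_contra hc
  push_neg at hc
  apply h
  conv_lhs => rw [g.as_sum, map_sum]
  apply Finset.sum_eq_zero
  intro m hm
  rw [aeval_monomial, Finsupp.prod_fintype _ _ (fun i => pow_zero _), Fin.prod_univ_two]
  simp only [Matrix.cons_val_zero, Matrix.cons_val_one, Matrix.head_cons]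
  rw [zero_pow (hc m (mem_support_iff.mp hm)), zero_mul, mul_zero]

lemma cast_pred_add_one {k : ℕ} (h : 0 < k) : ((k - 1 : ℕ) : ℂ) + 1 = (k : ℂ) := by
  have : (k - 1) + 1 = k := Nat.sub_add_cancel h
  exact_mod_cast congrArg (Nat.cast (R := ℂ)) this

end
end Stmt8Aux

open MvPolynomial in
/-- For a convenient weighted homogeneous two-variable complex polynomial `g` with an
isolated singularity at the origin, not of the form `β₁z₁ + β₂z₂^k`, the complex Hessian
determinant `g_{11}·g_{22} − g_{12}·g_{21}` is not the zero polynomial. -/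
theorem stmt_8 (p q n : ℕ) (hp : 0 < p) (hq : 0 < q) (hn : 0 < n) (hpq : p ≤ q)
    (g : MvPolynomial (Fin 2) ℂ)
    (hconv₁ : MvPolynomial.aeval ![Polynomial.X, (0 : Polynomial ℂ)] g ≠ 0)
    (hconv₂ : MvPolynomial.aeval ![(0 : Polynomial ℂ), Polynomial.X] g ≠ 0)
    (hwh : ∀ c : ℂ, c ≠ 0 → ∀ z : Fin 2 → ℂ,
      MvPolynomial.eval ![c ^ q * z 0, c ^ p * z 1] g =
        c ^ (p * q * n) * MvPolynomial.eval z g)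
    (hsing0 : MvPolynomial.eval 0 (MvPolynomial.pderiv 0 g) = 0 ∧
      MvPolynomial.eval 0 (MvPolynomial.pderiv 1 g) = 0)
    (hiso : ∃ ε : ℝ, 0 < ε ∧ ∀ z : Fin 2 → ℂ, z ≠ 0 → ‖z‖ < ε →
      ¬(MvPolynomial.eval z (MvPolynomial.pderiv 0 g) = 0 ∧
        MvPolynomial.eval z (MvPolynomial.pderiv 1 g) = 0))
    (hform : ¬ ∃ (β₁ β₂ : ℂ) (k : ℕ),
      g = MvPolynomial.C β₁ * MvPolynomial.X 0 + MvPolynomial.C β₂ * MvPolynomial.X 1 ^ k) :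
    MvPolynomial.pderiv 0 (MvPolynomial.pderiv 0 g) *
        MvPolynomial.pderiv 1 (MvPolynomial.pderiv 1 g) -
      MvPolynomial.pderiv 0 (MvPolynomial.pderiv 1 g) *
        MvPolynomial.pderiv 1 (MvPolynomial.pderiv 0 g) ≠ 0 := by
  intro h0
  classical
  obtain ⟨d, hd⟩ : ∃ d, d = p * q * n := ⟨_, rfl⟩
  -- weighted homogeneity of g
  have hg : Stmt8Aux.Homog p q d g := by
    apply Stmt8Aux.homog_of_scaling
    intro z
    rw [hd]
    exact hwh 2 two_ne_zero z
  -- corner monomials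
  obtain ⟨mb, hmb, hmb1⟩ := Stmt8Aux.exists_m1_eq_zero hconv₁
  obtain ⟨ma, hma, hma0⟩ := Stmt8Aux.exists_m0_eq_zero hconv₂
  have hmb0 : mb 0 = p * n := by
    have h1 := hg mb hmb
    simp only [Stmt8Aux.W, hmb1, mul_zero, add_zero] at h1
    have h2 : q * mb 0 = q * (p * n) := by rw [h1, hd]; ring
    exact Nat.eq_of_mul_eq_mul_left hq h2
  have hma1 : ma 1 = q * n := by
    have h1 := hg ma hma
    simp only [Stmt8Aux.W, hma0, mul_zero, zero_add] at h1
    have h2 : p * ma 1 = p * (q * n) := by rw [h1, hd]; ring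
    exact Nat.eq_of_mul_eq_mul_left hp h2
  have hpn : 0 < p * n := Nat.mul_pos hp hn
  have hqn : 0 < q * n := Nat.mul_pos hq hn
  have hmbs : mb = Finsupp.single 0 (p * n) := by
    apply Stmt8Aux.finsupp_ext
    · rw [hmb0]; simp
    · rw [hmb1]; simp
  have hmas : ma = Finsupp.single 1 (q * n) := by
    apply Stmt8Aux.finsupp_ext
    · rw [hma0]; simp
    · rw [hma1]; simp
  -- the first partials are nonzero
  have hg1ne : MvPolynomial.pderiv 0 g ≠ 0 := by
    apply ne_zero_iff.mpr
    refine ⟨Finsupp.single 0 (p * n - 1), ?_⟩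
    rw [Stmt8Aux.coeff_pderiv]
    have hadd : (Finsupp.single 0 (p*n-1) : Fin 2 →₀ ℕ) + Finsupp.single 0 1
        = Finsupp.single 0 (p*n) := by
      rw [← Finsupp.single_add]
      congr 1
      omega
    rw [hadd, ← hmbs]
    apply mul_ne_zero _ hmb
    have h1 : (Finsupp.single 0 (p*n-1) : Fin 2 →₀ ℕ) 0 = p*n-1 := by simp
    rw [h1, Stmt8Aux.cast_pred_add_one hpn]
    exact_mod_cast hpn.ne'
  have hg2ne : MvPolynomial.pderiv 1 g ≠ 0 := by
    apply ne_zero_iff.mpr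
    refine ⟨Finsupp.single 1 (q * n - 1), ?_⟩
    rw [Stmt8Aux.coeff_pderiv]
    have hadd : (Finsupp.single 1 (q*n-1) : Fin 2 →₀ ℕ) + Finsupp.single 1 1
        = Finsupp.single 1 (q*n) := by
      rw [← Finsupp.single_add]
      congr 1
      omega
    rw [hadd, ← hmas]
    apply mul_ne_zero _ hma
    have h1 : (Finsupp.single 1 (q*n-1) : Fin 2 →₀ ℕ) 1 = q*n-1 := by simp
    rw [h1, Stmt8Aux.cast_pred_add_one hqn]
    exact_mod_cast hqn.ne'
  -- case analysis on p * n
  rcases Nat.lt_or_ge (p * n) 2 with hpn2 | hpn2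
  · -- degenerate case : p = n = 1, g = β₁ z₁ + β₂ z₂^q
    have hpn1 : p * n = 1 := by omega
    have hp1 : p = 1 := Nat.eq_one_of_mul_eq_one_right hpn1
    have hn1 : n = 1 := Nat.eq_one_of_mul_eq_one_left hpn1
    have hdq : d = q := by rw [hd, hp1, hn1]; ring
    apply hform
    refine ⟨coeff (Finsupp.single 0 1) g, coeff (Finsupp.single 1 q) g, q, ?_⟩
    have hx : (X 0 : MvPolynomial (Fin 2) ℂ) = X 0 ^ 1 := (pow_one _).symm
    ext m
    rw [hx, coeff_add, coeff_C_mul, coeff_C_mul, coeff_X_pow, coeff_X_pow]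
    by_cases hm : coeff m g = 0
    · rw [hm]
      have e1 : Finsupp.single (0 : Fin 2) 1 = m → coeff (Finsupp.single (0 : Fin 2) 1) g = 0 :=
        fun h => by rw [h]; exact hm
      have e2 : Finsupp.single (1 : Fin 2) q = m → coeff (Finsupp.single (1 : Fin 2) q) g = 0 :=
        fun h => by rw [h]; exact hm
      split_ifs with h1 h2 h2
      · rw [e1 h1, e2 h2]; ring
      · rw [e1 h1]; ring
      · rw [e2 h2]; ring
      · ring
    · have hWm := hg m hm
      rw [hdq] at hWm
      simp only [Stmt8Aux.W, hp1, one_mul] at hWm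
      -- q * m 0 + m 1 = q
      have hm0le : m 0 ≤ 1 := by
        by_contra hh
        push_neg at hh
        have h2 : q * 2 ≤ q * m 0 := Nat.mul_le_mul_left q hh
        omega
      have hcases : m 0 = 0 ∨ m 0 = 1 := by omega
      rcases hcases with hc | hc
      · have hm1 : m 1 = q := by
          have : q * m 0 = 0 := by rw [hc, mul_zero]
          omega
        have hmeq : Finsupp.single (1 : Fin 2) q = m := by
          symm
          apply Stmt8Aux.finsupp_ext
          · rw [hc]; simp
          · rw [hm1]; simp
        have hne : ¬ (Finsupp.single (0 : Fin 2) 1 = m) := by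
          intro hh
          have : (Finsupp.single (0 : Fin 2) 1) 0 = m 0 := by rw [hh]
          simp [hc] at this
        rw [if_pos hmeq, if_neg hne, hmeq]
        ring
      · have hm1 : m 1 = 0 := by
          have : q * m 0 = q := by rw [hc, mul_one]
          omega
        have hmeq : Finsupp.single (0 : Fin 2) 1 = m := by
          symm
          apply Stmt8Aux.finsupp_ext
          · rw [hc]; simp
          · rw [hm1]; simp
        have hne : ¬ (Finsupp.single (1 : Fin 2) q = m) := by
          intro hh
          have h1 : (Finsupp.single (1 : Fin 2) q) 1 = m 1 := by rw [hh]
          simp [hm1] at h1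
          omega
        rw [if_pos hmeq, if_neg hne, hmeq]
        ring
  · -- main case : p * n ≥ 2
    have hd2q : 2 * q ≤ d := by
      rw [hd]
      calc 2 * q ≤ (p * n) * q := Nat.mul_le_mul_right q hpn2
      _ = p * q * n := by ring
    -- homogeneity of the partials
    have hhg1 : Stmt8Aux.Homog p q (d - q) (MvPolynomial.pderiv 0 g) := fun m hm => by
      have := Stmt8Aux.homog_pderiv0 hg hm
      omega
    have hhg2 : Stmt8Aux.Homog p q (d - p) (MvPolynomial.pderiv 1 g) := fun m hm => by
      have := Stmt8Aux.homog_pderiv1 hg hm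
      omega
    have hE1 := Stmt8Aux.euler hhg1
    have hE2 := Stmt8Aux.euler hhg2
    rw [Stmt8Aux.pderiv_comm' g] at hE2
    rw [Stmt8Aux.pderiv_comm' g, sub_eq_zero] at h0
    -- h0 : ∂00 g * ∂11 g = ∂10 g * ∂10 g
    by_cases hrp : IsRelPrime (MvPolynomial.pderiv 0 g) (MvPolynomial.pderiv 1 g)
    · have he₁ne : ((d - q : ℕ) : ℂ) ≠ 0 := Nat.cast_ne_zero.mpr (by omega)
      have he₂ne : ((d - p : ℕ) : ℂ) ≠ 0 := Nat.cast_ne_zero.mpr (by omega)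
      have I1 : C ((d - q : ℕ) : ℂ) * MvPolynomial.pderiv 0 g *
            MvPolynomial.pderiv 1 (MvPolynomial.pderiv 0 g)
          = C ((d - p : ℕ) : ℂ) * MvPolynomial.pderiv 1 g *
            MvPolynomial.pderiv 0 (MvPolynomial.pderiv 0 g) := by
        linear_combination (MvPolynomial.pderiv 0 (MvPolynomial.pderiv 0 g)) * hE2
          - (MvPolynomial.pderiv 1 (MvPolynomial.pderiv 0 g)) * hE1
          - C ((p : ℕ) : ℂ) * X 1 * h0
      have I2 : C ((d - q : ℕ) : ℂ) * MvPolynomial.pderiv 0 g *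
            MvPolynomial.pderiv 1 (MvPolynomial.pderiv 1 g)
          = C ((d - p : ℕ) : ℂ) * MvPolynomial.pderiv 1 g *
            MvPolynomial.pderiv 1 (MvPolynomial.pderiv 0 g) := by
        linear_combination (MvPolynomial.pderiv 1 (MvPolynomial.pderiv 0 g)) * hE2
          - (MvPolynomial.pderiv 1 (MvPolynomial.pderiv 1 g)) * hE1
          + C ((q : ℕ) : ℂ) * X 0 * h0
      have hA0 : MvPolynomial.pderiv 0 (MvPolynomial.pderiv 0 g) = 0 := by
        have hdvd : MvPolynomial.pderiv 0 g ∣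
            MvPolynomial.pderiv 1 g * MvPolynomial.pderiv 0 (MvPolynomial.pderiv 0 g) := by
          have hv : C ((d - p : ℕ) : ℂ) *
              (MvPolynomial.pderiv 1 g * MvPolynomial.pderiv 0 (MvPolynomial.pderiv 0 g))
              = MvPolynomial.pderiv 0 g *
                (C ((d - q : ℕ) : ℂ) * MvPolynomial.pderiv 1 (MvPolynomial.pderiv 0 g)) := by
            linear_combination - I1
          have h1 : MvPolynomial.pderiv 0 g ∣ C ((d - p : ℕ) : ℂ) *
              (MvPolynomial.pderiv 1 g * MvPolynomial.pderiv 0 (MvPolynomial.pderiv 0 g)) :=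
            ⟨_, hv⟩
          have h2 : MvPolynomial.pderiv 1 g * MvPolynomial.pderiv 0 (MvPolynomial.pderiv 0 g)
              = C (((d - p : ℕ) : ℂ)⁻¹) * (C ((d - p : ℕ) : ℂ) *
                (MvPolynomial.pderiv 1 g * MvPolynomial.pderiv 0 (MvPolynomial.pderiv 0 g))) := by
            rw [← mul_assoc, ← C_mul, inv_mul_cancel₀ he₂ne, C_1, one_mul]
          rw [h2]
          exact h1.mul_left _
        have hdvdA := hrp.dvd_of_dvd_mul_left hdvd
        by_contra hAne
        obtain ⟨nn, hnnc, hnnW⟩ := Stmt8Aux.dvd_homog_bound hhg1 hg1ne hdvdA hAne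
        have hW := Stmt8Aux.homog_pderiv0 hhg1 hnnc
        omega
      have hB0 : MvPolynomial.pderiv 1 (MvPolynomial.pderiv 0 g) = 0 := by
        have hdvd : MvPolynomial.pderiv 0 g ∣
            MvPolynomial.pderiv 1 g * MvPolynomial.pderiv 1 (MvPolynomial.pderiv 0 g) := by
          have hv : C ((d - p : ℕ) : ℂ) *
              (MvPolynomial.pderiv 1 g * MvPolynomial.pderiv 1 (MvPolynomial.pderiv 0 g))
              = MvPolynomial.pderiv 0 g *
                (C ((d - q : ℕ) : ℂ) * MvPolynomial.pderiv 1 (MvPolynomial.pderiv 1 g)) := by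
            linear_combination - I2
          have h1 : MvPolynomial.pderiv 0 g ∣ C ((d - p : ℕ) : ℂ) *
              (MvPolynomial.pderiv 1 g * MvPolynomial.pderiv 1 (MvPolynomial.pderiv 0 g)) :=
            ⟨_, hv⟩
          have h2 : MvPolynomial.pderiv 1 g * MvPolynomial.pderiv 1 (MvPolynomial.pderiv 0 g)
              = C (((d - p : ℕ) : ℂ)⁻¹) * (C ((d - p : ℕ) : ℂ) *
                (MvPolynomial.pderiv 1 g * MvPolynomial.pderiv 1 (MvPolynomial.pderiv 0 g))) := by
            rw [← mul_assoc, ← C_mul, inv_mul_cancel₀ he₂ne, C_1, one_mul]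
          rw [h2]
          exact h1.mul_left _
        have hdvdB := hrp.dvd_of_dvd_mul_left hdvd
        by_contra hBne
        obtain ⟨nn, hnnc, hnnW⟩ := Stmt8Aux.dvd_homog_bound hhg1 hg1ne hdvdB hBne
        have hW := Stmt8Aux.homog_pderiv1 hhg1 hnnc
        omega
      -- Euler on g1 now forces g1 = 0
      rw [hA0, hB0, mul_zero, mul_zero, mul_zero, mul_zero, add_zero] at hE1
      rcases mul_eq_zero.mp hE1.symm with h | h
      · exact he₁ne (C_eq_zero.mp h)
      · exact hg1ne h
    · -- non-coprime case : common factor, so a common zero near the origin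
      rw [IsRelPrime] at hrp
      push_neg at hrp
      obtain ⟨f, hf1, hf2, hfu⟩ := hrp
      have hf0 : f ≠ 0 := by
        rintro rfl
        exact hg1ne (zero_dvd_iff.mp hf1)
      obtain ⟨j, hfj⟩ := Stmt8Aux.homog_of_dvd hhg1 hg1ne hf1
      have hjpos : 0 < j := by
        rcases Nat.eq_zero_or_pos j with h | h
        · exact absurd (Stmt8Aux.isUnit_of_homog_zero hp hq (h ▸ hfj) hf0) hfu
        · exact h
      obtain ⟨w, hw0, hwf⟩ := Stmt8Aux.exists_nonzero_root hp hq hfj hjpos hf0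
      have hwg1 : eval w (MvPolynomial.pderiv 0 g) = 0 := by
        obtain ⟨u, hu⟩ := hf1
        rw [hu, map_mul, hwf, zero_mul]
      have hwg2 : eval w (MvPolynomial.pderiv 1 g) = 0 := by
        obtain ⟨u, hu⟩ := hf2
        rw [hu, map_mul, hwf, zero_mul]
      obtain ⟨ε, hε, hH⟩ := hiso
      have hwnorm : (0:ℝ) < ‖w‖ + 1 := by positivity
      set r : ℝ := min 1 (ε / (2 * (‖w‖ + 1))) with hr
      have hr0 : 0 < r := lt_min one_pos (by positivity)
      have hr1 : r ≤ 1 := min_le_left _ _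
      have hrε : r * (‖w‖ + 1) < ε := by
        have h1 : r ≤ ε / (2 * (‖w‖ + 1)) := min_le_right _ _
        have h2 : r * (‖w‖+1) ≤ ε / (2 * (‖w‖ + 1)) * (‖w‖+1) :=
          mul_le_mul_of_nonneg_right h1 (by positivity)
        have h3 : ε / (2 * (‖w‖ + 1)) * (‖w‖+1) = ε / 2 := by
          field_simp
        rw [h3] at h2
        linarith
      have hrC : ((r:ℝ):ℂ) ≠ 0 := by exact_mod_cast hr0.ne'
      have hz0 : (![(r:ℂ)^q * w 0, (r:ℂ)^p * w 1] : Fin 2 → ℂ) ≠ 0 := by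
        obtain ⟨i, hi⟩ := Function.ne_iff.mp hw0
        intro hzz
        apply hi
        fin_cases i
        · have h := congrFun hzz 0
          simp only [Matrix.cons_val_zero, Pi.zero_apply] at h
          exact (mul_eq_zero.mp h).resolve_left (pow_ne_zero _ hrC)
        · have h := congrFun hzz 1
          simp only [Matrix.cons_val_one, Matrix.head_cons, Pi.zero_apply] at h
          exact (mul_eq_zero.mp h).resolve_left (pow_ne_zero _ hrC)
      have hrnorm : ‖((r:ℝ):ℂ)‖ = r := by
        rw [Complex.norm_real]
        exact abs_of_pos hr0
      have hbound : ∀ (k : ℕ), k ≠ 0 → ∀ x : ℂ, ‖x‖ ≤ ‖w‖ → ‖(r:ℂ)^k * x‖ < ε := by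
        intro k hk x hx
        rw [norm_mul, norm_pow, hrnorm]
        calc r ^ k * ‖x‖ ≤ r * (‖w‖ + 1) := by
              apply mul_le_mul (pow_le_of_le_one hr0.le hr1 hk) (by linarith)
                (norm_nonneg _) hr0.le
        _ < ε := hrε
      have hznorm : ‖(![(r:ℂ)^q * w 0, (r:ℂ)^p * w 1] : Fin 2 → ℂ)‖ < ε := by
        rw [pi_norm_lt_iff hε]
        intro i
        fin_cases i
        · simp only [Matrix.cons_val_zero]
          exact hbound q hq.ne' (w 0) (norm_le_pi_norm w 0)
        · simp only [Matrix.cons_val_one, Matrix.head_cons]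
          exact hbound p hp.ne' (w 1) (norm_le_pi_norm w 1)
      apply hH _ hz0 hznorm
      constructor
      · rw [Stmt8Aux.eval_scale hhg1 ((r:ℝ):ℂ) w, hwg1, mul_zero]
      · rw [Stmt8Aux.eval_scale hhg2 ((r:ℝ):ℂ) w, hwg2, mul_zero]
end

section
/- In the setting of the weighted homogeneous pair (f,g), suppose in addition g(z) = β_1 z_1 + β_2 z_2^k with k ≥ 2 and β_1, β_2 ≠ 0. Then the determinant of the mixed Hessian H(fḡ) of the mixed polynomial fḡ(z) = f(z)·conj(g(z)) is not identically zero as a function on ℂ². -/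
open Complex

noncomputable section

section AuxA
open MvPolynomial

abbrev P2 := MvPolynomial (Fin 2) ℂ



/-- The ℝ-linear derivative of `z ↦ eval z φ`. -/
def evalD (φ : MvPolynomial (Fin 2) ℂ) (w : Fin 2 → ℂ) : (Fin 2 → ℂ) →L[ℝ] ℂ :=
  ((∑ j : Fin 2, eval w (pderiv j φ) • (ContinuousLinearMap.proj j :
      (Fin 2 → ℂ) →L[ℂ] ℂ))).restrictScalars ℝ

lemma evalD_apply (φ : MvPolynomial (Fin 2) ℂ) (w v : Fin 2 → ℂ) :
    evalD φ w v = ∑ j : Fin 2, eval w (pderiv j φ) * v j := by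
  simp [evalD, ContinuousLinearMap.sum_apply, smul_eq_mul]

lemma hasFDerivAt_eval (φ : MvPolynomial (Fin 2) ℂ) (w : Fin 2 → ℂ) :
    HasFDerivAt (fun z => eval z φ) (evalD φ w) w := by
  induction φ using MvPolynomial.induction_on with
  | C a =>
      have : evalD (C a : MvPolynomial (Fin 2) ℂ) w = 0 := by
        ext v; simp [evalD_apply]
      rw [this]
      simpa using hasFDerivAt_const (a : ℂ) w
  | add p r hp hr =>
      have : evalD (p + r) w = evalD p w + evalD r w := by
        ext v; simp [evalD_apply, mul_add, add_mul, Finset.sum_add_distrib]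
      rw [this]
      simp only [map_add]
      exact hp.add hr
  | mul_X p i hp =>
      have hproj : HasFDerivAt (fun z : Fin 2 → ℂ => z i)
          ((ContinuousLinearMap.proj i : (Fin 2 → ℂ) →L[ℂ] ℂ).restrictScalars ℝ) w :=
        ((ContinuousLinearMap.proj i : (Fin 2 → ℂ) →L[ℂ] ℂ).restrictScalars ℝ).hasFDerivAt
      have h := hp.mul hproj
      have heq : evalD (p * X i) w =
          eval w p • ((ContinuousLinearMap.proj i : (Fin 2 → ℂ) →L[ℂ] ℂ).restrictScalars ℝ)
            + w i • evalD p w := by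
        ext v
        simp only [evalD_apply, ContinuousLinearMap.add_apply,
          ContinuousLinearMap.smul_apply, ContinuousLinearMap.coe_restrictScalars',
          ContinuousLinearMap.proj_apply, smul_eq_mul, pderiv_mul]
        rw [Fin.sum_univ_two, Fin.sum_univ_two]
        fin_cases i <;>
          simp [pderiv_X_self, pderiv_X_of_ne, mul_comm, mul_add, add_mul] <;> ring
      rw [heq]
      simp only [map_mul, eval_X]
      exact h



lemma hasFDerivAt_mixed (φ ψ : MvPolynomial (Fin 2) ℂ) (w : Fin 2 → ℂ) :
    HasFDerivAt (fun z => eval z φ * (starRingEnd ℂ) (eval z ψ))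
      (eval w φ • (Complex.conjCLE.toContinuousLinearMap.comp (evalD ψ w))
        + ((starRingEnd ℂ) (eval w ψ)) • evalD φ w) w := by
  have hφ := hasFDerivAt_eval φ w
  have hψ := hasFDerivAt_eval ψ w
  have hconj : HasFDerivAt (fun z => (starRingEnd ℂ) (eval z ψ))
      (Complex.conjCLE.toContinuousLinearMap.comp (evalD ψ w)) w := by
    exact (Complex.conjCLE.toContinuousLinearMap.hasFDerivAt).comp w hψ
  exact hφ.mul hconj

lemma fderiv_mixed_apply (φ ψ : MvPolynomial (Fin 2) ℂ) (w v : Fin 2 → ℂ) :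
    fderiv ℝ (fun z => eval z φ * (starRingEnd ℂ) (eval z ψ)) w v =
      eval w φ * (starRingEnd ℂ) (∑ j : Fin 2, eval w (pderiv j ψ) * v j)
      + (starRingEnd ℂ) (eval w ψ) * (∑ j : Fin 2, eval w (pderiv j φ) * v j) := by
  rw [(hasFDerivAt_mixed φ ψ w).fderiv]
  simp [evalD_apply, smul_eq_mul]

lemma wD_mixed (φ ψ : MvPolynomial (Fin 2) ℂ) (j : Fin 2) (w : Fin 2 → ℂ) :
    wD (fun z => eval z φ * (starRingEnd ℂ) (eval z ψ)) j w =
      eval w (pderiv j φ) * (starRingEnd ℂ) (eval w ψ) := by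
  rw [wD, fderiv_mixed_apply, fderiv_mixed_apply]
  have h1 : ∀ χ : MvPolynomial (Fin 2) ℂ,
      (∑ i : Fin 2, eval w (pderiv i χ) * (Pi.single j (1:ℂ) : Fin 2 → ℂ) i) = eval w (pderiv j χ) := by
    intro χ; rw [Fin.sum_univ_two]; fin_cases j <;> simp
  have h2 : ∀ χ : MvPolynomial (Fin 2) ℂ,
      (∑ i : Fin 2, eval w (pderiv i χ) * (Pi.single j Complex.I : Fin 2 → ℂ) i)
        = Complex.I * eval w (pderiv j χ) := by
    intro χ; rw [Fin.sum_univ_two]; fin_cases j <;> simp [mul_comm]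
  rw [h1, h1, h2, h2]
  simp only [map_mul]
  rw [Complex.conj_I]
  ring_nf
  rw [Complex.I_sq]
  ring

lemma wDbar_mixed (φ ψ : MvPolynomial (Fin 2) ℂ) (j : Fin 2) (w : Fin 2 → ℂ) :
    wDbar (fun z => eval z φ * (starRingEnd ℂ) (eval z ψ)) j w =
      eval w φ * (starRingEnd ℂ) (eval w (pderiv j ψ)) := by
  rw [wDbar, fderiv_mixed_apply, fderiv_mixed_apply]
  have h1 : ∀ χ : MvPolynomial (Fin 2) ℂ,
      (∑ i : Fin 2, eval w (pderiv i χ) * (Pi.single j (1:ℂ) : Fin 2 → ℂ) i) = eval w (pderiv j χ) := by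
    intro χ; rw [Fin.sum_univ_two]; fin_cases j <;> simp
  have h2 : ∀ χ : MvPolynomial (Fin 2) ℂ,
      (∑ i : Fin 2, eval w (pderiv i χ) * (Pi.single j Complex.I : Fin 2 → ℂ) i)
        = Complex.I * eval w (pderiv j χ) := by
    intro χ; rw [Fin.sum_univ_two]; fin_cases j <;> simp [mul_comm]
  rw [h1, h1, h2, h2]
  simp only [map_mul]
  rw [Complex.conj_I]
  ring_nf
  rw [Complex.I_sq]
  ring

lemma det_fin_four' (M : Matrix (Fin 4) (Fin 4) ℂ) :
    M.det =
      M 0 0 * (M 1 1 * (M 2 2 * M 3 3 - M 2 3 * M 3 2) -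
               M 1 2 * (M 2 1 * M 3 3 - M 2 3 * M 3 1) +
               M 1 3 * (M 2 1 * M 3 2 - M 2 2 * M 3 1)) -
      M 0 1 * (M 1 0 * (M 2 2 * M 3 3 - M 2 3 * M 3 2) -
               M 1 2 * (M 2 0 * M 3 3 - M 2 3 * M 3 0) +
               M 1 3 * (M 2 0 * M 3 2 - M 2 2 * M 3 0)) +
      M 0 2 * (M 1 0 * (M 2 1 * M 3 3 - M 2 3 * M 3 1) -
               M 1 1 * (M 2 0 * M 3 3 - M 2 3 * M 3 0) +
               M 1 3 * (M 2 0 * M 3 1 - M 2 1 * M 3 0)) -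
      M 0 3 * (M 1 0 * (M 2 1 * M 3 2 - M 2 2 * M 3 1) -
               M 1 1 * (M 2 0 * M 3 2 - M 2 2 * M 3 0) +
               M 1 2 * (M 2 0 * M 3 1 - M 2 1 * M 3 0)) := by
  norm_num [Matrix.det_succ_row_zero, Fin.sum_univ_succ]
  have e1 : (Fin.succ 2 : Fin 4) = 3 := rfl
  have e2 : (Fin.castSucc 2 : Fin 4) = 2 := by decide
  have e3 : ((2 : Fin 4).succAbove 2) = 3 := by decide
  have e4 : ((1 : Fin 4).succAbove 2) = 3 := by decide
  simp only [e1, e2, e3, e4]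
  ring

def sumEquiv4 : Fin 4 ≃ (Fin 2 ⊕ Fin 2) where
  toFun := ![Sum.inl 0, Sum.inl 1, Sum.inr 0, Sum.inr 1]
  invFun x := match x with
    | Sum.inl j => ![(0:Fin 4),1] j
    | Sum.inr j => ![(2:Fin 4),3] j
  left_inv := by decide
  right_inv := by rintro (j | j) <;> fin_cases j <;> rfl

lemma det_sum_matrix (M : Matrix (Fin 2 ⊕ Fin 2) (Fin 2 ⊕ Fin 2) ℂ) :
    M.det = (M.submatrix sumEquiv4 sumEquiv4).det :=
  (Matrix.det_submatrix_equiv_self sumEquiv4 M).symm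

lemma det_2x2sum (M : Matrix (Fin 2 ⊕ Fin 2) (Fin 2 ⊕ Fin 2) ℂ) :
    M.det =
      M (.inl 0) (.inl 0) * (M (.inl 1) (.inl 1) * (M (.inr 0) (.inr 0) * M (.inr 1) (.inr 1) - M (.inr 0) (.inr 1) * M (.inr 1) (.inr 0)) -
               M (.inl 1) (.inr 0) * (M (.inr 0) (.inl 1) * M (.inr 1) (.inr 1) - M (.inr 0) (.inr 1) * M (.inr 1) (.inl 1)) +
               M (.inl 1) (.inr 1) * (M (.inr 0) (.inl 1) * M (.inr 1) (.inr 0) - M (.inr 0) (.inr 0) * M (.inr 1) (.inl 1))) -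
      M (.inl 0) (.inl 1) * (M (.inl 1) (.inl 0) * (M (.inr 0) (.inr 0) * M (.inr 1) (.inr 1) - M (.inr 0) (.inr 1) * M (.inr 1) (.inr 0)) -
               M (.inl 1) (.inr 0) * (M (.inr 0) (.inl 0) * M (.inr 1) (.inr 1) - M (.inr 0) (.inr 1) * M (.inr 1) (.inl 0)) +
               M (.inl 1) (.inr 1) * (M (.inr 0) (.inl 0) * M (.inr 1) (.inr 0) - M (.inr 0) (.inr 0) * M (.inr 1) (.inl 0))) +
      M (.inl 0) (.inr 0) * (M (.inl 1) (.inl 0) * (M (.inr 0) (.inl 1) * M (.inr 1) (.inr 1) - M (.inr 0) (.inr 1) * M (.inr 1) (.inl 1)) -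
               M (.inl 1) (.inl 1) * (M (.inr 0) (.inl 0) * M (.inr 1) (.inr 1) - M (.inr 0) (.inr 1) * M (.inr 1) (.inl 0)) +
               M (.inl 1) (.inr 1) * (M (.inr 0) (.inl 0) * M (.inr 1) (.inl 1) - M (.inr 0) (.inl 1) * M (.inr 1) (.inl 0))) -
      M (.inl 0) (.inr 1) * (M (.inl 1) (.inl 0) * (M (.inr 0) (.inl 1) * M (.inr 1) (.inr 0) - M (.inr 0) (.inr 0) * M (.inr 1) (.inl 1)) -
               M (.inl 1) (.inl 1) * (M (.inr 0) (.inl 0) * M (.inr 1) (.inr 0) - M (.inr 0) (.inr 0) * M (.inr 1) (.inl 0)) +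
               M (.inl 1) (.inr 0) * (M (.inr 0) (.inl 0) * M (.inr 1) (.inl 1) - M (.inr 0) (.inl 1) * M (.inr 1) (.inl 0))) := by
  rw [det_sum_matrix, det_fin_four']
  rfl


lemma my_pderiv_comm (φ : P2) (i j : Fin 2) :
    pderiv i (pderiv j φ) = pderiv j (pderiv i φ) := by
  induction φ using MvPolynomial.induction_on with
  | C a => simp
  | add p r hp hr => simp [hp, hr]
  | mul_X p l hp =>
      rcases eq_or_ne i j with rfl | hij
      · rfl
      · simp only [pderiv_mul, map_add, pderiv_mul, hp]
        rw [pderiv_X, pderiv_X]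
        rcases eq_or_ne l i with rfl | hli <;> rcases eq_or_ne l j with rfl | hlj <;>
          simp_all [Pi.single_apply] <;> ring

lemma my_eval_aeval (g : Fin 2 → P2) (z : Fin 2 → ℂ) (f : P2) :
    eval z (aeval g f) = eval (fun i => eval z (g i)) f := by
  induction f using MvPolynomial.induction_on with
  | C a => simp
  | add p r hp hr => rw [map_add, map_add, hp, hr, map_add]
  | mul_X p i hp => rw [map_mul, aeval_X, map_mul, hp, map_mul, eval_X]

lemma aeval_scale_monomial (w : Fin 2 → ℂ) (e : Fin 2 →₀ ℕ) (a : ℂ) :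
    aeval (fun i => C (w i) * X i : Fin 2 → P2) (monomial e a)
      = monomial e ((∏ i : Fin 2, w i ^ e i) * a) := by
  rw [aeval_monomial]
  have hmono : (monomial e ((∏ i : Fin 2, w i ^ e i) * a) : P2)
      = C a * (C (∏ i : Fin 2, w i ^ e i) * monomial e 1) := by
    rw [C_mul_monomial, C_mul_monomial]; ring_nf
  rw [hmono]
  have h1 : (monomial e (1:ℂ) : P2) = ∏ i : Fin 2, (X i : P2) ^ e i := by
    rw [monomial_eq, map_one, one_mul, Finsupp.prod_fintype]
    intro i; exact pow_zero _
  rw [h1]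
  rw [Finsupp.prod_fintype]
  · have : ∀ i : Fin 2, (C (w i) * X i : P2) ^ e i = C (w i ^ e i) * X i ^ e i := by
      intro i; rw [mul_pow, ← C_pow]
    simp_rw [this]
    rw [Finset.prod_mul_distrib]
    have : (∏ i : Fin 2, (C (w i ^ e i) : P2)) = C (∏ i : Fin 2, w i ^ e i) := by
      rw [← map_prod]
    rw [this]
    simp [algebraMap_eq, mul_comm, mul_left_comm]
  · intro i; exact pow_zero _

lemma coeff_scale (w : Fin 2 → ℂ) (f : P2) (d : Fin 2 →₀ ℕ) :
    coeff d (aeval (fun i => C (w i) * X i : Fin 2 → P2) f)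
      = (∏ i : Fin 2, w i ^ d i) * coeff d f := by
  conv_lhs => rw [f.as_sum, map_sum]
  rw [coeff_sum]
  simp_rw [aeval_scale_monomial, coeff_monomial]
  by_cases hd : d ∈ f.support
  · rw [Finset.sum_eq_single_of_mem d hd]
    · simp
    · intro e he hne; simp [hne]
  · rw [Finset.sum_eq_zero, notMem_support_iff.mp hd, mul_zero]
    intro e he
    have hne : e ≠ d := fun h => hd (h ▸ he)
    simp [hne]

lemma support_cond (f : P2) (q m : ℕ)
    (hf : ∀ c : ℂ, c ≠ 0 → ∀ z : Fin 2 → ℂ,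
      eval ![c ^ q * z 0, c * z 1] f = c ^ (q * m) * eval z f) :
    ∀ d ∈ f.support, q * d 0 + d 1 = q * m := by
  intro d hd
  have hcoeff : coeff d f ≠ 0 := mem_support_iff.mp hd
  have key : (2:ℂ) ^ (q * d 0 + d 1) * coeff d f = 2 ^ (q * m) * coeff d f := by
    have hpoly : aeval (fun i => C (![(2:ℂ)^q, 2] i) * X i : Fin 2 → P2) f
        = C ((2:ℂ)^(q*m)) * f := by
      apply MvPolynomial.funext
      intro z
      rw [my_eval_aeval]
      have hz : (fun i => eval z (C (![(2:ℂ)^q, 2] i) * X i)) = ![(2:ℂ)^q * z 0, 2 * z 1] := by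
        funext i; fin_cases i <;> simp
      rw [hz, hf 2 (by norm_num) z]
      simp
    have h := congrArg (coeff d) hpoly
    rw [coeff_scale, coeff_C_mul, Fin.prod_univ_two] at h
    calc (2:ℂ) ^ (q * d 0 + d 1) * coeff d f
        = ((2:ℂ)^q) ^ (d 0) * 2 ^ (d 1) * coeff d f := by rw [← pow_mul, ← pow_add]
      _ = 2 ^ (q*m) * coeff d f := by simpa using h
  have h2 : (2:ℂ) ^ (q * d 0 + d 1) = 2 ^ (q * m) := mul_right_cancel₀ hcoeff key
  have h3 : (2:ℕ) ^ (q * d 0 + d 1) = 2 ^ (q * m) := by exact_mod_cast h2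
  exact Nat.pow_right_injective le_rfl h3

lemma X_mul_pderiv_monomial (j : Fin 2) (e : Fin 2 →₀ ℕ) (a : ℂ) :
    (X j : P2) * pderiv j (monomial e a) = monomial e ((e j : ℂ) * a) := by
  rw [pderiv_monomial]
  rcases Nat.eq_zero_or_pos (e j) with h0 | hpos
  · simp [h0]
  · rw [X, monomial_mul, one_mul]
    have he : Finsupp.single j 1 + (e - Finsupp.single j 1) = e := by
      ext i
      simp only [Finsupp.add_apply, Finsupp.tsub_apply, Finsupp.single_apply]
      rcases eq_or_ne j i with rfl | hji
      · norm_num; omega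
      · simp [hji]
    rw [he]
    congr 1
    push_cast
    ring


lemma euler2 (f : P2) (q m : ℕ)
    (hs : ∀ d ∈ f.support, q * d 0 + d 1 = q * m) :
    C (q:ℂ) * (X 0 * pderiv 0 f) + X 1 * pderiv 1 f = C (q:ℂ) * C (m:ℂ) * f := by
  rw [f.as_sum]
  rw [map_sum (pderiv 0), map_sum (pderiv 1), Finset.mul_sum, Finset.mul_sum,
    Finset.mul_sum, Finset.mul_sum, ← Finset.sum_add_distrib]
  apply Finset.sum_congr rfl
  intro d hd
  rw [X_mul_pderiv_monomial, X_mul_pderiv_monomial, C_mul_monomial, mul_assoc,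
    C_mul_monomial, C_mul_monomial, ← map_add]
  congr 1
  have h : ((q * d 0 + d 1 : ℕ) : ℂ) = ((q * m : ℕ) : ℂ) := by rw [hs d hd]
  push_cast at h
  linear_combination coeff d f * h

def ev1 : P2 →ₐ[ℂ] Polynomial ℂ := aeval ![Polynomial.X, (1 : Polynomial ℂ)]

lemma ev1_X0 : ev1 (X 0) = Polynomial.X := by simp [ev1]
lemma ev1_X1 : ev1 (X 1) = 1 := by simp [ev1]
lemma ev1_C (a : ℂ) : ev1 (C a) = Polynomial.C a := by simp [ev1]

lemma ev1_pderiv (φ : P2) :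
    Polynomial.derivative (ev1 φ) = ev1 (pderiv 0 φ) := by
  induction φ using MvPolynomial.induction_on with
  | C a => simp [ev1_C]
  | add p r hp hr => simp only [map_add, Polynomial.derivative_add, hp, hr]
  | mul_X p i hp =>
      rw [map_mul, Polynomial.derivative_mul, hp, pderiv_mul, map_add, map_mul]
      fin_cases i <;> simp [ev1, pderiv_X]




end AuxA

section AuxB
open MvPolynomial Polynomial
lemma ev1_coeff (f : P2) (t : ℕ) :
    (ev1 f).coeff t = ∑ d ∈ f.support, (if d 0 = t then coeff d f else 0) := by
  conv_lhs => rw [f.as_sum]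
  rw [map_sum, Polynomial.finset_sum_coeff]
  apply Finset.sum_congr rfl
  intro d hd
  have hm : ev1 (monomial d (coeff d f)) = Polynomial.C (coeff d f) * Polynomial.X ^ (d 0) := by
    rw [ev1, MvPolynomial.aeval_monomial, Finsupp.prod_fintype _ _ (fun i => pow_zero _), Fin.prod_univ_two]
    simp [Algebra.smul_def]
  rw [hm, Polynomial.coeff_C_mul, Polynomial.coeff_X_pow]
  by_cases h : d 0 = t
  · simp [h]
  · rw [if_neg (fun hh => h hh.symm), if_neg h, mul_zero]

lemma d_eq_of_d0_eq_m {f : P2} {q m : ℕ} (hs : ∀ d ∈ f.support, q * d 0 + d 1 = q * m)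
    {d : Fin 2 →₀ ℕ} (hd : d ∈ f.support) (h0 : d 0 = m) : d = Finsupp.single 0 m := by
  have h := hs d hd
  rw [h0] at h
  have h1 : d 1 = 0 := by
    have h' : q * m + d 1 = q * m + 0 := by rw [Nat.add_zero]; exact h
    exact Nat.add_left_cancel h'
  ext i; fin_cases i <;> simp [h0, h1, Finsupp.single_apply]

lemma d_eq_of_d0_eq_zero {f : P2} {q m : ℕ} (hs : ∀ d ∈ f.support, q * d 0 + d 1 = q * m)
    {d : Fin 2 →₀ ℕ} (hd : d ∈ f.support) (h0 : d 0 = 0) : d = Finsupp.single 1 (q * m) := by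
  have h := hs d hd
  rw [h0] at h
  have h1 : d 1 = q * m := by simpa using h
  ext i; fin_cases i <;> simp [h0, h1, Finsupp.single_apply]

lemma ev1_coeff_top (f : P2) (q m : ℕ) (hs : ∀ d ∈ f.support, q * d 0 + d 1 = q * m) :
    (ev1 f).coeff m = coeff (Finsupp.single 0 m) f := by
  rw [ev1_coeff]
  by_cases hmem : Finsupp.single 0 m ∈ f.support
  · rw [Finset.sum_eq_single_of_mem _ hmem]
    · simp [Finsupp.single_eq_same]
    · intro d hd hne
      rcases eq_or_ne (d 0) m with h0 | h0
      · exact absurd (d_eq_of_d0_eq_m hs hd h0) hne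
      · simp [h0]
  · rw [Finset.sum_eq_zero, notMem_support_iff.mp hmem]
    intro d hd
    rcases eq_or_ne (d 0) m with h0 | h0
    · exact absurd (d_eq_of_d0_eq_m hs hd h0) (fun h => hmem (h ▸ hd))
    · simp [h0]

lemma ev1_coeff_bot (f : P2) (q m : ℕ) (hs : ∀ d ∈ f.support, q * d 0 + d 1 = q * m) :
    (ev1 f).coeff 0 = coeff (Finsupp.single 1 (q * m)) f := by
  rw [ev1_coeff]
  by_cases hmem : Finsupp.single 1 (q * m) ∈ f.support
  · rw [Finset.sum_eq_single_of_mem _ hmem]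
    · simp [Finsupp.single_apply]
    · intro d hd hne
      rcases eq_or_ne (d 0) 0 with h0 | h0
      · exact absurd (d_eq_of_d0_eq_zero hs hd h0) hne
      · simp [h0]
  · rw [Finset.sum_eq_zero, notMem_support_iff.mp hmem]
    intro d hd
    rcases eq_or_ne (d 0) 0 with h0 | h0
    · exact absurd (d_eq_of_d0_eq_zero hs hd h0) (fun h => hmem (h ▸ hd))
    · simp [h0]

lemma bigQ_ne_zero (f : P2) (q m : ℕ) (hq2 : 2 ≤ q) (hm : 0 < m)
    (hs : ∀ d ∈ f.support, q * d 0 + d 1 = q * m)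
    (ha₁ : coeff (Finsupp.single 0 m) f ≠ 0)
    (ha₂ : coeff (Finsupp.single 1 (q * m)) f ≠ 0) :
    (pderiv 0 f)^2 * pderiv 1 (pderiv 1 f)
      - pderiv 0 f * pderiv 1 f * pderiv 0 (pderiv 1 f)
      - pderiv 0 f * pderiv 1 f * pderiv 1 (pderiv 0 f)
      + (pderiv 1 f)^2 * pderiv 0 (pderiv 0 f) ≠ 0 := by
  intro hQ0
  rw [my_pderiv_comm f 1 0] at hQ0
  set f0 := pderiv 0 f with hf0
  set f1 := pderiv 1 f with hf1
  set f00 := pderiv 0 f0 with hf00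
  set f01 := pderiv 0 f1 with hf01
  set f11 := pderiv 1 f1 with hf11
  have hQ : f0^2 * f11 - 2 * (f0 * f1 * f01) + f1^2 * f00 = 0 := by
    linear_combination hQ0
  have hE1 := euler2 f q m hs
  have hE2 := congrArg (pderiv 0) hE1
  have hE3 := congrArg (pderiv 1) hE1
  simp only [map_add, pderiv_mul, pderiv_C, pderiv_X_self,
    pderiv_X_of_ne (show (1 : Fin 2) ≠ 0 by decide),
    pderiv_X_of_ne (show (0 : Fin 2) ≠ 1 by decide),
    zero_mul, mul_zero, zero_add, add_zero, one_mul, mul_one, ← hf0, ← hf1] at hE2 hE3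
  rw [← hf00, ← hf01] at hE2
  rw [my_pderiv_comm f 1 0, ← hf01, ← hf11] at hE3
  -- the weighted-homogeneous identity (†)
  have hdagger : MvPolynomial.C (q:ℂ) * MvPolynomial.C (q:ℂ) * MvPolynomial.C (m:ℂ) *
        MvPolynomial.C (m:ℂ) * (f * f * f00)
      = MvPolynomial.C (q:ℂ) * MvPolynomial.C (q:ℂ) * (MvPolynomial.C (m:ℂ) - 1) *
          (X 0 * (f0 * f0 * f0))
        + (MvPolynomial.C (q:ℂ) * MvPolynomial.C (m:ℂ) - 2 * MvPolynomial.C (q:ℂ) + 1) *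
          (X 1 * (f0 * f0 * f1)) := by
    linear_combination (X 1 : P2)^2 * hQ
      - f00 * (MvPolynomial.C (q:ℂ) * X 0 * f0 + X 1 * f1
          + MvPolynomial.C (q:ℂ) * MvPolynomial.C (m:ℂ) * f) * hE1
      + (MvPolynomial.C (q:ℂ) * X 0 * f0^2 + 2 * (X 1 * f0 * f1)) * hE2
      - f0^2 * (X 1 : P2) * hE3
  -- transfer to one variable
  have hd := congrArg ev1 hdagger
  have hE1' := congrArg ev1 hE1
  simp only [map_add, map_sub, map_mul, map_pow, map_one, map_ofNat, ev1_X0, ev1_X1, ev1_C,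
    mul_one, one_mul] at hd hE1'
  rw [← ev1_pderiv] at hE1'
  rw [show ev1 f00 = Polynomial.derivative (Polynomial.derivative (ev1 f)) by
      rw [ev1_pderiv, ev1_pderiv], ← ev1_pderiv] at hd
  set φ := ev1 f with hφdef
  set ψ := ev1 f1 with hψdef
  set cq : Polynomial ℂ := Polynomial.C (q:ℂ) with hcq
  set cm : Polynomial ℂ := Polynomial.C (m:ℂ) with hcm
  have hkey : cq^2 * cm^2 * φ^2 * Polynomial.derivative (Polynomial.derivative φ)
      = cq * (cq - 1) * Polynomial.X * (Polynomial.derivative φ)^3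
        + cq * cm * (cq * cm - 2 * cq + 1) * φ * (Polynomial.derivative φ)^2 := by
    linear_combination hd + (cq * cm - 2 * cq + 1) * (Polynomial.derivative φ)^2 * hE1'
  have hcoefftop : φ.coeff m ≠ 0 := by
    rw [hφdef, ev1_coeff_top f q m hs]; exact ha₁
  have hφ0 : φ ≠ 0 := fun h => hcoefftop (by simp [h])
  have hdeg : 0 < φ.degree :=
    lt_of_lt_of_le (by exact_mod_cast hm) (Polynomial.le_degree_of_ne_zero hcoefftop)
  have heval0 : φ.eval 0 ≠ 0 := by
    rw [← Polynomial.coeff_zero_eq_eval_zero, hφdef, ev1_coeff_bot f q m hs]; exact ha₂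
  obtain ⟨r, hr⟩ := Complex.exists_root hdeg
  have hr0 : r ≠ 0 := by intro h; rw [h] at hr; exact heval0 hr
  obtain ⟨ρ, hfac, hnd⟩ := φ.exists_eq_pow_rootMultiplicity_mul_and_not_dvd hφ0 r
  have hρ : ρ.eval r ≠ 0 := fun h => hnd (Polynomial.dvd_iff_isRoot.mpr h)
  have hμ : 0 < Polynomial.rootMultiplicity r φ :=
    (Polynomial.rootMultiplicity_pos hφ0).mpr hr
  obtain ⟨ν, hν⟩ : ∃ ν, Polynomial.rootMultiplicity r φ = ν + 1 :=
    ⟨Polynomial.rootMultiplicity r φ - 1, by omega⟩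
  rw [hν] at hfac
  set s : Polynomial ℂ := Polynomial.X - Polynomial.C r with hsdef
  set τ : Polynomial ℂ := Polynomial.C ((ν:ℂ)+1) * ρ + s * Polynomial.derivative ρ
    with hτdef
  have hseval : s.eval r = 0 := by simp [hsdef]
  have hτeval : τ.eval r ≠ 0 := by
    rw [hτdef]
    simp only [Polynomial.eval_add, Polynomial.eval_mul, Polynomial.eval_C, hseval,
      zero_mul, add_zero]
    refine mul_ne_zero ?_ hρ
    intro h
    have : ((ν + 1 : ℕ) : ℂ) = 0 := by push_cast; linear_combination h
    exact Nat.cast_ne_zero.mpr (Nat.succ_ne_zero ν) this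
  have hsne : s ≠ 0 := Polynomial.X_sub_C_ne_zero r
  have hdφ : Polynomial.derivative φ = s ^ ν * τ := by
    rw [hfac, Polynomial.derivative_mul, Polynomial.derivative_pow,
      Polynomial.derivative_X_sub_C, hτdef, Nat.add_sub_cancel]
    push_cast
    ring
  have hq0 : (q:ℂ) ≠ 0 := Nat.cast_ne_zero.mpr (by omega)
  have hq1 : (q:ℂ) - 1 ≠ 0 := by
    intro h
    have h2 : ((q - 1 : ℕ) : ℂ) = 0 := by
      rw [Nat.cast_sub (by omega : 1 ≤ q)]; push_cast; linear_combination h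
    exact Nat.cast_ne_zero.mpr (by omega) h2
  rcases Nat.eq_zero_or_pos ν with hν0 | hνpos
  · -- simple root
    subst hν0
    rw [pow_zero, one_mul] at hdφ
    rw [hdφ, hfac] at hkey
    have hev := congrArg (Polynomial.eval r) hkey
    simp only [Polynomial.eval_add, Polynomial.eval_mul, Polynomial.eval_pow,
      Polynomial.eval_sub, Polynomial.eval_one, Polynomial.eval_ofNat, Polynomial.eval_X,
      Polynomial.eval_C, hseval, zero_mul, mul_zero, zero_add, add_zero, zero_pow,
      zero_add, pow_one, hcq, hcm] at hev
    have hzero : (q:ℂ) * ((q:ℂ) - 1) * r * (τ.eval r)^3 = 0 := by linear_combination -hev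
    exact (mul_ne_zero (mul_ne_zero (mul_ne_zero hq0 hq1) hr0)
      (pow_ne_zero 3 hτeval)) hzero
  · obtain ⟨w, hw⟩ : ∃ w, ν = w + 1 := ⟨ν - 1, by omega⟩
    subst hw
    have hddφ : Polynomial.derivative (Polynomial.derivative φ)
        = Polynomial.C ((w:ℂ)+1) * s ^ w * τ + s ^ (w+1) * Polynomial.derivative τ := by
      rw [hdφ, Polynomial.derivative_mul, Polynomial.derivative_pow,
        Polynomial.derivative_X_sub_C, Nat.add_sub_cancel]
      push_cast
      ring
    rw [hddφ, hdφ, hfac] at hkey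
    have hkey2 : s ^ (3*w+3) * (s * (cq^2 * cm^2 * ρ^2 * (Polynomial.C ((w:ℂ)+1) * τ
          + s * Polynomial.derivative τ)))
        = s ^ (3*w+3) * (cq * (cq - 1) * Polynomial.X * τ^3
          + s * (cq * cm * (cq * cm - 2 * cq + 1) * ρ * τ^2)) := by
      linear_combination hkey
    have hc := mul_left_cancel₀ (pow_ne_zero (3*w+3) hsne) hkey2
    have hev := congrArg (Polynomial.eval r) hc
    simp only [Polynomial.eval_add, Polynomial.eval_mul, Polynomial.eval_pow,
      Polynomial.eval_sub, Polynomial.eval_one, Polynomial.eval_ofNat, Polynomial.eval_X,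
      Polynomial.eval_C, hseval, zero_mul, mul_zero, zero_add,
      add_zero, hcq, hcm] at hev
    have hzero : (q:ℂ) * ((q:ℂ) - 1) * r * (τ.eval r)^3 = 0 := by linear_combination -hev
    exact (mul_ne_zero (mul_ne_zero (mul_ne_zero hq0 hq1) hr0)
      (pow_ne_zero 3 hτeval)) hzero


end AuxB


/-- In the weighted homogeneous setting, if `g(z) = β₁z₁ + β₂z₂^k` with `k ≥ 2`, the
determinant of the mixed Hessian of `fḡ` is not identically zero on `ℂ²`. -/
theorem stmt_9 (p q m n : ℕ) (hp : 0 < p) (hq : 0 < q) (hm : 0 < m) (hn : 0 < n)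
    (hmn : n < m) (hpq : p ≤ q)
    (f g : MvPolynomial (Fin 2) ℂ)
    (hf : ∀ c : ℂ, c ≠ 0 → ∀ z : Fin 2 → ℂ,
      MvPolynomial.eval ![c ^ q * z 0, c ^ p * z 1] f =
        c ^ (p * q * m) * MvPolynomial.eval z f)
    (hg : ∀ c : ℂ, c ≠ 0 → ∀ z : Fin 2 → ℂ,
      MvPolynomial.eval ![c ^ q * z 0, c ^ p * z 1] g =
        c ^ (p * q * n) * MvPolynomial.eval z g)
    (ha₁ : MvPolynomial.coeff (Finsupp.single 0 (p * m)) f ≠ 0)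
    (ha₂ : MvPolynomial.coeff (Finsupp.single 1 (q * m)) f ≠ 0)
    (hb₁ : MvPolynomial.coeff (Finsupp.single 0 (p * n)) g ≠ 0)
    (hb₂ : MvPolynomial.coeff (Finsupp.single 1 (q * n)) g ≠ 0)
    (F : (Fin 2 → ℂ) → ℂ)
    (hF : F = fun z => MvPolynomial.eval z f * (starRingEnd ℂ) (MvPolynomial.eval z g))
    (hsing0 : IsSingularity F 0)
    (hiso : ∃ ε : ℝ, 0 < ε ∧ ∀ w : Fin 2 → ℂ, w ≠ 0 → ‖w‖ < ε → ¬ IsSingularity F w)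
    (k : ℕ) (hk : 2 ≤ k) (β₁ β₂ : ℂ) (hβ₁ : β₁ ≠ 0) (hβ₂ : β₂ ≠ 0)
    (hgform : g = MvPolynomial.C β₁ * MvPolynomial.X 0 +
      MvPolynomial.C β₂ * MvPolynomial.X 1 ^ k) :
    ∃ w : Fin 2 → ℂ, (mixedHessian F w).det ≠ 0 := by
  classical
  -- Step 1: derive p = 1, n = 1, k = q from the weighted homogeneity of g
  have hg10 := hg 2 (by norm_num) ![1, 0]
  have hg01 := hg 2 (by norm_num) ![0, 1]
  rw [hgform] at hg10 hg01
  simp only [MvPolynomial.eval_add, MvPolynomial.eval_mul, MvPolynomial.eval_pow,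
    MvPolynomial.eval_C, MvPolynomial.eval_X, Matrix.cons_val_zero, Matrix.cons_val_one,
    Matrix.head_cons, mul_one, mul_zero, zero_pow (by omega : k ≠ 0), add_zero,
    zero_add] at hg10 hg01
  have hqpqn : q = p * q * n := by
    have h1 : (2:ℂ) ^ q * β₁ = 2 ^ (p * q * n) * β₁ := by linear_combination hg10
    have h2 : (2:ℂ) ^ q = 2 ^ (p * q * n) := mul_right_cancel₀ hβ₁ h1
    have h3 : ((2 ^ q : ℕ) : ℂ) = ((2 ^ (p * q * n) : ℕ) : ℂ) := by push_cast; exact h2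
    exact Nat.pow_right_injective le_rfl (Nat.cast_injective h3)
  have hpn : p * n = 1 := by
    have : q * 1 = q * (p * n) := by
      calc q * 1 = q := by ring
        _ = p * q * n := hqpqn
        _ = q * (p * n) := by ring
    exact (Nat.eq_of_mul_eq_mul_left hq this).symm
  have hp1 : p = 1 := Nat.dvd_one.mp ⟨n, hpn.symm⟩
  have hn1 : n = 1 := Nat.dvd_one.mp ⟨p, by rw [mul_comm]; exact hpn.symm⟩
  subst hp1
  subst hn1
  have hkq : k = q := by
    have h1 : (2:ℂ) ^ k * β₂ = 2 ^ (1 * q * 1) * β₂ := by linear_combination hg01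
    have h2 : (2:ℂ) ^ k = 2 ^ (1 * q * 1) := mul_right_cancel₀ hβ₂ h1
    have h3 : ((2 ^ k : ℕ) : ℂ) = ((2 ^ (1 * q * 1) : ℕ) : ℂ) := by push_cast; exact h2
    have := Nat.pow_right_injective le_rfl (Nat.cast_injective h3)
    omega
  rw [hkq] at hk hgform
  have hq2 : 2 ≤ q := hk
  -- Step 2: support condition for f
  have hf' : ∀ c : ℂ, c ≠ 0 → ∀ z : Fin 2 → ℂ,
      MvPolynomial.eval ![c ^ q * z 0, c * z 1] f = c ^ (q * m) * MvPolynomial.eval z f := by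
    intro c hc z
    have := hf c hc z
    simpa using this
  have hsupp := support_cond f q m hf'
  -- Step 3: the polynomial Q is nonzero
  have ha₁' : MvPolynomial.coeff (Finsupp.single 0 m) f ≠ 0 := by simpa using ha₁
  have hQA := bigQ_ne_zero f q m hq2 hm hsupp ha₁' ha₂
  set QA : P2 := (MvPolynomial.pderiv 0 f)^2 * MvPolynomial.pderiv 1 (MvPolynomial.pderiv 1 f)
      - MvPolynomial.pderiv 0 f * MvPolynomial.pderiv 1 f *
          MvPolynomial.pderiv 0 (MvPolynomial.pderiv 1 f)
      - MvPolynomial.pderiv 0 f * MvPolynomial.pderiv 1 f *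
          MvPolynomial.pderiv 1 (MvPolynomial.pderiv 0 f)
      + (MvPolynomial.pderiv 1 f)^2 * MvPolynomial.pderiv 0 (MvPolynomial.pderiv 0 f)
    with hQAdef
  -- Step 4: choose a witness point
  have hf0 : f ≠ 0 := fun h => ha₁' (by simp [h])
  have hg0 : g ≠ 0 := fun h => hb₁ (by simp [h])
  have hΦ : f * g * QA * MvPolynomial.X 1 ≠ 0 :=
    mul_ne_zero (mul_ne_zero (mul_ne_zero hf0 hg0) hQA) (MvPolynomial.X_ne_zero 1)
  obtain ⟨w, hw⟩ : ∃ w : Fin 2 → ℂ,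
      MvPolynomial.eval w (f * g * QA * MvPolynomial.X 1) ≠ 0 := by
    by_contra hcon
    push_neg at hcon
    exact hΦ (MvPolynomial.funext fun x => by rw [hcon x, map_zero])
  rw [map_mul, map_mul, map_mul, MvPolynomial.eval_X] at hw
  have hfv : MvPolynomial.eval w f ≠ 0 := by
    intro h; apply hw; rw [h]; ring
  have hgv : MvPolynomial.eval w g ≠ 0 := by
    intro h; apply hw; rw [h]; ring
  have hQAv : MvPolynomial.eval w QA ≠ 0 := by
    intro h; apply hw; rw [h]; ring
  have hw1 : w 1 ≠ 0 := by
    intro h; apply hw; rw [h]; ring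
  refine ⟨w, ?_⟩
  -- Step 5: Hessian entries
  have entll : ∀ j k' : Fin 2, mixedHessian F w (Sum.inl j) (Sum.inl k')
      = MvPolynomial.eval w (MvPolynomial.pderiv j (MvPolynomial.pderiv k' f)) *
        (starRingEnd ℂ) (MvPolynomial.eval w g) := by
    intro j k'
    have hfun : (fun z => wD F k' z)
        = (fun z => MvPolynomial.eval z (MvPolynomial.pderiv k' f) *
            (starRingEnd ℂ) (MvPolynomial.eval z g)) := by
      funext z; rw [hF]; exact wD_mixed f g k' z
    show wD (fun z => wD F k' z) j w = _
    rw [hfun, wD_mixed]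
  have entlr : ∀ j k' : Fin 2, mixedHessian F w (Sum.inl j) (Sum.inr k')
      = MvPolynomial.eval w (MvPolynomial.pderiv j f) *
        (starRingEnd ℂ) (MvPolynomial.eval w (MvPolynomial.pderiv k' g)) := by
    intro j k'
    have hfun : (fun z => wDbar F k' z)
        = (fun z => MvPolynomial.eval z f *
            (starRingEnd ℂ) (MvPolynomial.eval z (MvPolynomial.pderiv k' g))) := by
      funext z; rw [hF]; exact wDbar_mixed f g k' z
    show wD (fun z => wDbar F k' z) j w = _
    rw [hfun, wD_mixed]
  have entrl : ∀ j k' : Fin 2, mixedHessian F w (Sum.inr j) (Sum.inl k')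
      = MvPolynomial.eval w (MvPolynomial.pderiv k' f) *
        (starRingEnd ℂ) (MvPolynomial.eval w (MvPolynomial.pderiv j g)) := by
    intro j k'
    have hfun : (fun z => wD F k' z)
        = (fun z => MvPolynomial.eval z (MvPolynomial.pderiv k' f) *
            (starRingEnd ℂ) (MvPolynomial.eval z g)) := by
      funext z; rw [hF]; exact wD_mixed f g k' z
    show wDbar (fun z => wD F k' z) j w = _
    rw [hfun, wDbar_mixed]
  have entrr : ∀ j k' : Fin 2, mixedHessian F w (Sum.inr j) (Sum.inr k')
      = MvPolynomial.eval w f *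
        (starRingEnd ℂ) (MvPolynomial.eval w (MvPolynomial.pderiv j (MvPolynomial.pderiv k' g))) := by
    intro j k'
    have hfun : (fun z => wDbar F k' z)
        = (fun z => MvPolynomial.eval z f *
            (starRingEnd ℂ) (MvPolynomial.eval z (MvPolynomial.pderiv k' g))) := by
      funext z; rw [hF]; exact wDbar_mixed f g k' z
    show wDbar (fun z => wDbar F k' z) j w = _
    rw [hfun, wDbar_mixed]
  -- Step 6: evaluate the derivatives of g
  have hne10 : (1 : Fin 2) ≠ 0 := by decide
  have hne01 : (0 : Fin 2) ≠ 1 := by decide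
  have hpg0 : MvPolynomial.pderiv 0 g = MvPolynomial.C β₁ := by
    rw [hgform]
    simp [MvPolynomial.pderiv_pow, MvPolynomial.pderiv_X_of_ne hne10]
  have e0 : MvPolynomial.eval w (MvPolynomial.pderiv 0 g) = β₁ := by
    rw [hpg0, MvPolynomial.eval_C]
  have e00 : MvPolynomial.eval w (MvPolynomial.pderiv 0 (MvPolynomial.pderiv 0 g)) = 0 := by
    rw [hpg0]; simp
  have e10 : MvPolynomial.eval w (MvPolynomial.pderiv 1 (MvPolynomial.pderiv 0 g)) = 0 := by
    rw [hpg0]; simp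
  have hpg1 : MvPolynomial.pderiv 1 g
      = (q : P2) * MvPolynomial.C β₂ * MvPolynomial.X 1 ^ (q - 1) := by
    rw [hgform]
    simp only [map_add, MvPolynomial.pderiv_mul, MvPolynomial.pderiv_C,
      MvPolynomial.pderiv_pow, MvPolynomial.pderiv_X_self,
      MvPolynomial.pderiv_X_of_ne hne01, zero_mul, mul_zero, zero_add, add_zero, mul_one]
    ring
  have e01 : MvPolynomial.eval w (MvPolynomial.pderiv 0 (MvPolynomial.pderiv 1 g)) = 0 := by
    rw [hpg1]
    simp [MvPolynomial.pderiv_mul, MvPolynomial.pderiv_pow,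
      MvPolynomial.pderiv_X_of_ne hne10]
  have e11 : MvPolynomial.eval w (MvPolynomial.pderiv 1 (MvPolynomial.pderiv 1 g))
      = (q:ℂ) * ((q - 1 : ℕ):ℂ) * β₂ * (w 1) ^ (q - 2) := by
    rw [hpg1]
    simp only [MvPolynomial.pderiv_mul, MvPolynomial.pderiv_C,
      MvPolynomial.pderiv_pow, MvPolynomial.pderiv_X_self, mul_one, zero_mul, mul_zero,
      zero_add, add_zero, map_mul, map_pow, MvPolynomial.eval_X, MvPolynomial.eval_C,
      map_natCast]
    have hexp : q - 1 - 1 = q - 2 := by omega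
    have hpn : MvPolynomial.pderiv (σ := Fin 2) (R := ℂ) 1 (q : P2) = 0 := by
      have : ((q : ℕ) : P2) = MvPolynomial.C ((q:ℕ) : ℂ) := by
        simp
      rw [this, MvPolynomial.pderiv_C]
    rw [hpn]
    simp [hexp]
    ring
  have he11ne : (q:ℂ) * ((q - 1 : ℕ):ℂ) * β₂ * (w 1) ^ (q - 2) ≠ 0 := by
    refine mul_ne_zero (mul_ne_zero (mul_ne_zero ?_ ?_) hβ₂) (pow_ne_zero _ hw1)
    · exact Nat.cast_ne_zero.mpr (by omega)
    · exact Nat.cast_ne_zero.mpr (by omega)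
  -- Step 7: compute the determinant and conclude
  have hdetval : (mixedHessian F w).det
      = -(MvPolynomial.eval w f * MvPolynomial.eval w QA) *
          ((starRingEnd ℂ) (MvPolynomial.eval w g) * ((starRingEnd ℂ) β₁)^2 *
            (starRingEnd ℂ) (MvPolynomial.eval w
              (MvPolynomial.pderiv 1 (MvPolynomial.pderiv 1 g)))) := by
    rw [det_2x2sum]
    simp only [entll, entlr, entrl, entrr, e0, e00, e01, e10, map_zero, mul_zero, zero_mul]
    rw [hQAdef]
    simp only [map_add, map_sub, map_mul, map_pow]
    ring
  rw [hdetval]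
  refine mul_ne_zero (neg_ne_zero.mpr (mul_ne_zero hfv hQAv)) ?_
  refine mul_ne_zero (mul_ne_zero ?_ (pow_ne_zero _ ?_)) ?_
  · rw [starRingEnd_apply]; exact star_ne_zero.mpr hgv
  · rw [starRingEnd_apply]; exact star_ne_zero.mpr hβ₁
  · rw [e11, starRingEnd_apply]; exact star_ne_zero.mpr he11ne

end
end

section
/- Let f ∈ ℂ[z_1,z_2] be a homogeneous polynomial of degree m. Writing f_j = ∂f/∂z_j and f_{jk} = ∂²f/∂z_j∂z_k, the polynomial identity (m−1)²·(2·f_{12}·f_1·f_2 − f_{11}·f_2² − f_{22}·f_1²) = (f_{12}² − f_{11}·f_{22})·(z_1²·f_{11} + 2·z_1·z_2·f_{12} + z_2²·f_{22}) holds. -/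
open MvPolynomial Finsupp

private lemma euler_id {n m : ℕ} {f : MvPolynomial (Fin n) ℂ} (hf : f.IsHomogeneous m) :
    ∑ i, X i * pderiv i f = C (m : ℂ) * f := by
  conv_lhs => rw [as_sum f]
  conv_rhs => rw [as_sum f]
  simp only [map_sum, Finset.mul_sum]
  rw [Finset.sum_comm]
  refine Finset.sum_congr rfl fun d hd => ?_
  have hdeg : d.degree = m := by
    have := hf (MvPolynomial.mem_support_iff.mp hd)
    rw [degree_eq_weight_one]; exact this
  have hterm : ∀ i : Fin n, X i * pderiv i (monomial d (coeff d f))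
      = monomial d ((d i : ℂ) * coeff d f) := by
    intro i
    rw [pderiv_monomial, X, monomial_mul, one_mul]
    rcases eq_or_ne (d i) 0 with h | h
    · simp [h]
    · rw [add_tsub_cancel_of_le (by rwa [Finsupp.single_le_iff, Nat.one_le_iff_ne_zero]),
        mul_comm]
  simp only [hterm, ← map_sum, C_mul_monomial]
  congr 1
  rw [← Finset.sum_mul]
  congr 1
  rw [← hdeg, Finsupp.degree_apply]
  rw [Nat.cast_sum]
  exact (Finset.sum_subset (Finset.subset_univ _) fun i _ hi => by
    simp [Finsupp.notMem_support_iff.mp hi]).symm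

private lemma pderiv_hom {n m : ℕ} {f : MvPolynomial (Fin n) ℂ} (hf : f.IsHomogeneous m)
    (i : Fin n) : (pderiv i f).IsHomogeneous (m - 1) := by
  conv => rw [as_sum f]
  rw [map_sum]
  apply IsHomogeneous.sum
  intro d hd
  rw [pderiv_monomial]
  have hdeg : d.degree = m := by
    have := hf (MvPolynomial.mem_support_iff.mp hd)
    rw [degree_eq_weight_one]; exact this
  rcases eq_or_ne (d i) 0 with h | h
  · simp [h, isHomogeneous_zero]
  · apply isHomogeneous_monomial
    have hle : Finsupp.single i 1 ≤ d := by
      rwa [Finsupp.single_le_iff, Nat.one_le_iff_ne_zero]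
    have hs : (Finsupp.single i 1).degree = 1 := by
      simp [Finsupp.degree_apply, Finsupp.support_single_ne_zero i one_ne_zero]
    have : (d - Finsupp.single i 1).degree + (Finsupp.single i 1).degree = d.degree := by
      simp only [Finsupp.degree_eq_weight_one]
      rw [← map_add, tsub_add_cancel_of_le hle]
    omega

private lemma pderiv_comm' {n : ℕ} (i j : Fin n) (f : MvPolynomial (Fin n) ℂ) :
    pderiv i (pderiv j f) = pderiv j (pderiv i f) := by
  rcases eq_or_ne i j with rfl | hij
  · rfl
  · conv_lhs => rw [as_sum f]
    conv_rhs => rw [as_sum f]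
    simp only [map_sum, pderiv_monomial]
    refine Finset.sum_congr rfl fun d _ => ?_
    congr 1
    · rw [tsub_tsub, tsub_tsub, add_comm]
    · rw [Finsupp.tsub_apply, Finsupp.tsub_apply, Finsupp.single_eq_of_ne hij,
        Finsupp.single_eq_of_ne (Ne.symm hij), Nat.sub_zero, Nat.sub_zero]
      ring

private lemma euler2_s10 {m : ℕ} {f : MvPolynomial (Fin 2) ℂ} (hf : f.IsHomogeneous m) (j : Fin 2) :
    X 0 * pderiv 0 (pderiv j f) + X 1 * pderiv 1 (pderiv j f)
      = C ((m : ℂ) - 1) * pderiv j f := by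
  rcases m with _ | m
  · have h0 : pderiv j f = 0 := by
      conv_lhs => rw [as_sum f]
      rw [map_sum]
      apply Finset.sum_eq_zero
      intro d hd
      have hdeg : d.degree = 0 := by
        have := hf (MvPolynomial.mem_support_iff.mp hd)
        rw [degree_eq_weight_one]; exact this
      have : d j = 0 := by
        have := Finsupp.le_degree j d
        omega
      simp [pderiv_monomial, this]
    simp [h0]
  · have := euler_id (pderiv_hom hf j)
    rw [Fin.sum_univ_two] at this
    rw [this]
    congr 2
    push_cast [Nat.succ_sub_one]
    ring

/-- For a homogeneous polynomial `f ∈ ℂ[z₁,z₂]` of degree `m`, the polynomial identity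
`(m−1)²·(2f₁₂f₁f₂ − f₁₁f₂² − f₂₂f₁²) = (f₁₂² − f₁₁f₂₂)·(z₁²f₁₁ + 2z₁z₂f₁₂ + z₂²f₂₂)`
holds, where `f_j = ∂f/∂z_j` and `f_{jk} = ∂²f/∂z_j∂z_k`. -/
theorem stmt_10 (m : ℕ) (f : MvPolynomial (Fin 2) ℂ) (hf : f.IsHomogeneous m) :
    MvPolynomial.C ((m : ℂ) - 1) ^ 2 *
        (2 * MvPolynomial.pderiv 0 (MvPolynomial.pderiv 1 f) * MvPolynomial.pderiv 0 f *
            MvPolynomial.pderiv 1 f -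
          MvPolynomial.pderiv 0 (MvPolynomial.pderiv 0 f) * MvPolynomial.pderiv 1 f ^ 2 -
          MvPolynomial.pderiv 1 (MvPolynomial.pderiv 1 f) * MvPolynomial.pderiv 0 f ^ 2) =
      (MvPolynomial.pderiv 0 (MvPolynomial.pderiv 1 f) ^ 2 -
          MvPolynomial.pderiv 0 (MvPolynomial.pderiv 0 f) *
            MvPolynomial.pderiv 1 (MvPolynomial.pderiv 1 f)) *
        (MvPolynomial.X 0 ^ 2 * MvPolynomial.pderiv 0 (MvPolynomial.pderiv 0 f) +
          2 * MvPolynomial.X 0 * MvPolynomial.X 1 *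
            MvPolynomial.pderiv 0 (MvPolynomial.pderiv 1 f) +
          MvPolynomial.X 1 ^ 2 * MvPolynomial.pderiv 1 (MvPolynomial.pderiv 1 f)) := by
  have e1 := euler2_s10 hf 0
  have e2 := euler2_s10 hf 1
  rw [pderiv_comm' 1 0] at e1
  set a := pderiv 0 (pderiv 0 f)
  set b := pderiv 0 (pderiv 1 f)
  set c := pderiv 1 (pderiv 1 f)
  set f1 := pderiv 0 f
  set f2 := pderiv 1 f
  have key : C ((m : ℂ) - 1) ^ 2 * (2 * b * f1 * f2 - a * f2 ^ 2 - c * f1 ^ 2)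
      = 2 * b * (C ((m : ℂ) - 1) * f1) * (C ((m : ℂ) - 1) * f2)
        - a * (C ((m : ℂ) - 1) * f2) ^ 2 - c * (C ((m : ℂ) - 1) * f1) ^ 2 := by ring
  rw [key, ← e1, ← e2]
  ring
end

section
/- In the setting of the weighted homogeneous pair (f,g), let h(z) = γ_1 z_1^{p(m−n)} + γ_2 z_2^{q(m−n)} with γ_1, γ_2 ∈ ℂ∖{0}, assume the zero sets {z ∈ ℂ² : f(z)·g(z) = 0} and {z ∈ ℂ² : h(z) = 0} intersect only at the origin, let t > 0 and F_t = fḡ + t·h. Then: (a) S_2(F_t) ⊆ {0}, i.e. any point at which all Wirtinger derivatives of F_t vanish is the origin; (b) if the origin is not in S_2(F_t), then the origin is a regular point of F_t, i.e. not a singularity of F_t. -/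
open Complex

noncomputable section

lemma proj_diff' (i : Fin 2) : Differentiable ℂ (fun z : Fin 2 → ℂ => z i) :=
  (ContinuousLinearMap.proj (R := ℂ) (φ := fun _ : Fin 2 => ℂ) i).differentiable

lemma eval_diff' (f : MvPolynomial (Fin 2) ℂ) :
    Differentiable ℂ (fun z : Fin 2 → ℂ => MvPolynomial.eval z f) := by
  induction f using MvPolynomial.induction_on with
  | C a => simpa using (differentiable_const (a : ℂ))
  | add p q hp hq => simp only [map_add]; exact hp.add hq
  | mul_X p i hp => simp only [map_mul, MvPolynomial.eval_X]; exact hp.mul (proj_diff' i)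

lemma euler' {A : (Fin 2 → ℂ) → ℂ} {w : Fin 2 → ℂ} (hA : Differentiable ℂ A)
    (q p d : ℕ)
    (hhom : ∀ c : ℂ, c ≠ 0 → A ![c ^ q * w 0, c ^ p * w 1] = c ^ d * A w) :
    (q : ℂ) * w 0 * fderiv ℂ A w (Pi.single 0 1) +
      (p : ℂ) * w 1 * fderiv ℂ A w (Pi.single 1 1) = (d : ℂ) * A w := by
  set v : Fin 2 → ℕ := ![q, p] with hv
  have hu : ∀ c : ℂ, (fun i => c ^ v i * w i) = ![c ^ q * w 0, c ^ p * w 1] := by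
    intro c; funext i; fin_cases i <;> simp [hv]
  have hw1 : (fun i => (1:ℂ) ^ v i * w i) = w := by funext i; simp
  have hderiv_u : HasDerivAt (fun c : ℂ => (fun i => c ^ v i * w i))
      (fun i => (v i : ℂ) * w i) 1 := by
    rw [hasDerivAt_pi]
    intro i
    simpa using (hasDerivAt_pow (v i) (1:ℂ)).mul_const (w i)
  have hφ : HasDerivAt (fun c : ℂ => A (fun i => c ^ v i * w i))
      (fderiv ℂ A w (fun i => (v i : ℂ) * w i)) 1 := by
    have h1 : HasFDerivAt A (fderiv ℂ A w) ((fun i => (1:ℂ) ^ v i * w i)) := by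
      rw [hw1]; exact (hA w).hasFDerivAt
    exact h1.comp_hasDerivAt 1 hderiv_u
  have hψ : HasDerivAt (fun c : ℂ => c ^ d * A w) ((d : ℂ) * A w) 1 := by
    simpa using (hasDerivAt_pow d (1:ℂ)).mul_const (A w)
  have heq : (fun c : ℂ => A (fun i => c ^ v i * w i)) =ᶠ[nhds 1] (fun c => c ^ d * A w) := by
    filter_upwards [eventually_ne_nhds (one_ne_zero (α := ℂ))] with c hc
    rw [hu c]; exact hhom c hc
  have hφ' : HasDerivAt (fun c : ℂ => A (fun i => c ^ v i * w i)) ((d : ℂ) * A w) 1 :=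
    hψ.congr_of_eventuallyEq heq
  have hD := hφ.unique hφ'
  have hdecomp : (fun i => (v i : ℂ) * w i) =
      ((q : ℂ) * w 0) • (Pi.single (0 : Fin 2) (1:ℂ) : Fin 2 → ℂ)
        + ((p : ℂ) * w 1) • (Pi.single (1 : Fin 2) (1:ℂ) : Fin 2 → ℂ) := by
    funext i; fin_cases i <;> simp [hv]
  rw [hdecomp, map_add, map_smul, map_smul, smul_eq_mul, smul_eq_mul] at hD
  exact hD

lemma single_I (j : Fin 2) : (Pi.single j Complex.I : Fin 2 → ℂ) =
    (Complex.I • (Pi.single j 1 : Fin 2 → ℂ) : Fin 2 → ℂ) := by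
  funext i
  rcases eq_or_ne i j with rfl | hij
  · simp
  · simp [Pi.single_eq_of_ne hij]

lemma main_calc {A B H F : (Fin 2 → ℂ) → ℂ} (hA : Differentiable ℂ A)
    (hB : Differentiable ℂ B) (hH : Differentiable ℂ H) (t : ℂ)
    (hF : F = fun z => A z * (starRingEnd ℂ) (B z) + t * H z) (w : Fin 2 → ℂ) :
    DifferentiableAt ℝ F w ∧
    (∀ v, fderiv ℝ F w v = A w * (starRingEnd ℂ) (fderiv ℂ B w v)
        + (starRingEnd ℂ) (B w) * fderiv ℂ A w v + t * fderiv ℂ H w v) ∧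
    ∀ j, wD F j w = (starRingEnd ℂ) (B w) * fderiv ℂ A w (Pi.single j 1)
          + t * fderiv ℂ H w (Pi.single j 1)
      ∧ wDbar F j w = A w * (starRingEnd ℂ) (fderiv ℂ B w (Pi.single j 1)) := by
  have hA' := ((hA w).hasFDerivAt).restrictScalars ℝ
  have hB' := ((hB w).hasFDerivAt).restrictScalars ℝ
  have hH' := ((hH w).hasFDerivAt).restrictScalars ℝ
  have hconj : HasFDerivAt (fun z : Fin 2 → ℂ => (starRingEnd ℂ) (B z))
      ((Complex.conjCLE.toContinuousLinearMap).comp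
        ((fderiv ℂ B w).restrictScalars ℝ)) w :=
    (Complex.conjCLE.toContinuousLinearMap.hasFDerivAt).comp w hB'
  have hFt : HasFDerivAt F
      ((A w • ((Complex.conjCLE.toContinuousLinearMap).comp
          ((fderiv ℂ B w).restrictScalars ℝ))
        + (starRingEnd ℂ) (B w) • ((fderiv ℂ A w).restrictScalars ℝ))
        + t • ((fderiv ℂ H w).restrictScalars ℝ)) w := by
    rw [hF]; exact (hA'.mul hconj).add (hH'.const_mul t)
  have hdiff : DifferentiableAt ℝ F w := hFt.differentiableAt
  have happ : ∀ v, fderiv ℝ F w v = A w * (starRingEnd ℂ) (fderiv ℂ B w v)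
      + (starRingEnd ℂ) (B w) * fderiv ℂ A w v + t * fderiv ℂ H w v := by
    intro v
    rw [hFt.fderiv]
    simp [smul_eq_mul]
  refine ⟨hdiff, happ, fun j => ?_⟩
  have hIA : fderiv ℂ A w (Pi.single j Complex.I) =
      Complex.I * fderiv ℂ A w (Pi.single j 1) := by
    rw [single_I, map_smul, smul_eq_mul]
  have hIB : fderiv ℂ B w (Pi.single j Complex.I) =
      Complex.I * fderiv ℂ B w (Pi.single j 1) := by
    rw [single_I, map_smul, smul_eq_mul]
  have hIH : fderiv ℂ H w (Pi.single j Complex.I) =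
      Complex.I * fderiv ℂ H w (Pi.single j 1) := by
    rw [single_I, map_smul, smul_eq_mul]
  constructor
  · rw [wD, happ, happ, hIA, hIB, hIH, map_mul, Complex.conj_I]
    ring_nf
    rw [Complex.I_sq]
    ring
  · rw [wDbar, happ, happ, hIA, hIB, hIH, map_mul, Complex.conj_I]
    ring_nf
    rw [Complex.I_sq]
    ring

/-- For the deformation `F_t = fḡ + t·h` with `h = γ₁z₁^{p(m−n)} + γ₂z₂^{q(m−n)}` whose
zero set meets `{fg = 0}` only at the origin: (a) any point where all Wirtinger
derivatives of `F_t` vanish is the origin; (b) if the origin is not such a point, the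
origin is a regular point of `F_t`. -/
theorem stmt_11
    (p q m n : ℕ) (hp : 0 < p) (hq : 0 < q) (hm : 0 < m) (hn : 0 < n)
    (hmn : n < m) (hpq : p ≤ q)
    (f g : MvPolynomial (Fin 2) ℂ)
    (hf : ∀ c : ℂ, c ≠ 0 → ∀ z : Fin 2 → ℂ,
      MvPolynomial.eval ![c ^ q * z 0, c ^ p * z 1] f =
        c ^ (p * q * m) * MvPolynomial.eval z f)
    (hg : ∀ c : ℂ, c ≠ 0 → ∀ z : Fin 2 → ℂ,
      MvPolynomial.eval ![c ^ q * z 0, c ^ p * z 1] g =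
        c ^ (p * q * n) * MvPolynomial.eval z g)
    (ha₁ : MvPolynomial.coeff (Finsupp.single 0 (p * m)) f ≠ 0)
    (ha₂ : MvPolynomial.coeff (Finsupp.single 1 (q * m)) f ≠ 0)
    (hb₁ : MvPolynomial.coeff (Finsupp.single 0 (p * n)) g ≠ 0)
    (hb₂ : MvPolynomial.coeff (Finsupp.single 1 (q * n)) g ≠ 0)
    (hsing0 : IsSingularity
      (fun z => MvPolynomial.eval z f * (starRingEnd ℂ) (MvPolynomial.eval z g)) 0)
    (hiso : ∃ ε : ℝ, 0 < ε ∧ ∀ w : Fin 2 → ℂ, w ≠ 0 → ‖w‖ < ε → ¬ IsSingularity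
      (fun z => MvPolynomial.eval z f * (starRingEnd ℂ) (MvPolynomial.eval z g)) w)
    (γ₁ γ₂ : ℂ) (hγ₁ : γ₁ ≠ 0) (hγ₂ : γ₂ ≠ 0)
    (h : (Fin 2 → ℂ) → ℂ)
    (hh : h = fun z => γ₁ * z 0 ^ (p * (m - n)) + γ₂ * z 1 ^ (q * (m - n)))
    (hcommon : ∀ z : Fin 2 → ℂ,
      MvPolynomial.eval z f * MvPolynomial.eval z g = 0 → h z = 0 → z = 0)
    (t : ℝ) (ht : 0 < t)
    (F : (Fin 2 → ℂ) → ℂ)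
    (hF : F = fun z =>
      MvPolynomial.eval z f * (starRingEnd ℂ) (MvPolynomial.eval z g) + (t : ℂ) * h z) :
    (∀ w : Fin 2 → ℂ, (∀ j : Fin 2, wD F j w = 0 ∧ wDbar F j w = 0) → w = 0) ∧
    ((¬ ∀ j : Fin 2, wD F j 0 = 0 ∧ wDbar F j 0 = 0) → ¬ IsSingularity F 0) := by
  have hdA : Differentiable ℂ (fun z : Fin 2 → ℂ => MvPolynomial.eval z f) := eval_diff' f
  have hdB : Differentiable ℂ (fun z : Fin 2 → ℂ => MvPolynomial.eval z g) := eval_diff' g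
  have hdH : Differentiable ℂ h := by
    rw [hh]
    exact ((differentiable_const γ₁).mul ((proj_diff' 0).pow _)).add
      ((differentiable_const γ₂).mul ((proj_diff' 1).pow _))
  have ht' : (t : ℂ) ≠ 0 := Complex.ofReal_ne_zero.mpr ht.ne'
  have hmn' : 0 < m - n := Nat.sub_pos_of_lt hmn
  have hpqm : ((p * q * m : ℕ) : ℂ) ≠ 0 :=
    Nat.cast_ne_zero.mpr (Nat.mul_pos (Nat.mul_pos hp hq) hm).ne'
  have hpqn : ((p * q * n : ℕ) : ℂ) ≠ 0 :=
    Nat.cast_ne_zero.mpr (Nat.mul_pos (Nat.mul_pos hp hq) hn).ne'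
  have hpqmn : ((p * q * (m - n) : ℕ) : ℂ) ≠ 0 :=
    Nat.cast_ne_zero.mpr (Nat.mul_pos (Nat.mul_pos hp hq) hmn').ne'
  -- homogeneity of h
  have hhomH : ∀ (w : Fin 2 → ℂ) (c : ℂ), c ≠ 0 →
      h ![c ^ q * w 0, c ^ p * w 1] = c ^ (p * q * (m - n)) * h w := by
    intro w c _
    rw [hh]
    simp only [Matrix.cons_val_zero, Matrix.cons_val_one, Matrix.head_cons]
    rw [mul_pow, mul_pow, ← pow_mul, ← pow_mul,
      show q * (p * (m - n)) = p * q * (m - n) by ring,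
      show p * (q * (m - n)) = p * q * (m - n) by ring]
    ring
  constructor
  · -- part (a)
    intro w hw
    obtain ⟨-, -, hWd⟩ := main_calc hdA hdB hdH (t : ℂ) hF w
    have EA := euler' (A := fun z : Fin 2 → ℂ => MvPolynomial.eval z f) hdA q p (p * q * m)
      (fun c hc => hf c hc w)
    have EB := euler' (A := fun z : Fin 2 → ℂ => MvPolynomial.eval z g) hdB q p (p * q * n)
      (fun c hc => hg c hc w)
    have EH := euler' (A := h) hdH q p (p * q * (m - n)) (fun c hc => hhomH w c hc)
    set Af := fun z : Fin 2 → ℂ => MvPolynomial.eval z f with hAf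
    set Bg := fun z : Fin 2 → ℂ => MvPolynomial.eval z g with hBg
    set a0 := fderiv ℂ Af w (Pi.single 0 1)
    set a1 := fderiv ℂ Af w (Pi.single 1 1)
    set b0 := fderiv ℂ Bg w (Pi.single 0 1)
    set b1 := fderiv ℂ Bg w (Pi.single 1 1)
    set d0 := fderiv ℂ h w (Pi.single 0 1)
    set d1 := fderiv ℂ h w (Pi.single 1 1)
    have e0 : (starRingEnd ℂ) (Bg w) * a0 + (t:ℂ) * d0 = 0 :=
      ((hWd 0).1).symm.trans (hw 0).1
    have e1 : (starRingEnd ℂ) (Bg w) * a1 + (t:ℂ) * d1 = 0 :=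
      ((hWd 1).1).symm.trans (hw 1).1
    have eb0 : Af w * (starRingEnd ℂ) b0 = 0 := ((hWd 0).2).symm.trans (hw 0).2
    have eb1 : Af w * (starRingEnd ℂ) b1 = 0 := ((hWd 1).2).symm.trans (hw 1).2
    -- Step 1 : Af w = 0 or Bg w = 0
    have c0 : (starRingEnd ℂ) (Af w) * b0 = 0 := by
      have := congrArg (starRingEnd ℂ) eb0
      simpa using this
    have c1 : (starRingEnd ℂ) (Af w) * b1 = 0 := by
      have := congrArg (starRingEnd ℂ) eb1
      simpa using this
    have hsum : (starRingEnd ℂ) (Af w) *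
        ((q:ℂ) * w 0 * b0 + (p:ℂ) * w 1 * b1) = 0 := by
      linear_combination ((q:ℂ) * w 0) * c0 + ((p:ℂ) * w 1) * c1
    rw [EB] at hsum
    have hAB : Af w = 0 ∨ Bg w = 0 := by
      rcases mul_eq_zero.mp hsum with hc | hc
      · left
        simpa using hc
      · rcases mul_eq_zero.mp hc with hc' | hc'
        · exact absurd hc' hpqn
        · exact Or.inr hc'
    have hABc : (starRingEnd ℂ) (Bg w) * Af w = 0 := by
      rcases hAB with h' | h' <;> simp [h']
    -- Step 2 : h w = 0
    have hsum2 : (starRingEnd ℂ) (Bg w) * ((q:ℂ) * w 0 * a0 + (p:ℂ) * w 1 * a1)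
        + (t:ℂ) * ((q:ℂ) * w 0 * d0 + (p:ℂ) * w 1 * d1) = 0 := by
      linear_combination ((q:ℂ) * w 0) * e0 + ((p:ℂ) * w 1) * e1
    rw [EA, EH] at hsum2
    have hHw : h w = 0 := by
      have ht3 : (t:ℂ) * (((p * q * (m - n) : ℕ) : ℂ) * h w) = 0 := by
        linear_combination hsum2 - ((p * q * m : ℕ) : ℂ) * hABc
      rcases mul_eq_zero.mp ht3 with hc | hc
      · exact absurd hc ht'
      · rcases mul_eq_zero.mp hc with hc' | hc'
        · exact absurd hc' hpqmn
        · exact hc'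
    exact hcommon w (by rcases hAB with h' | h' <;> simp [hAf, hBg] at h' <;> simp [h']) hHw
  · -- part (b)
    intro hnz hsing
    obtain ⟨hdF0, happ0, hWd0⟩ := main_calc hdA hdB hdH (t : ℂ) hF 0
    -- eval 0 f = 0 and eval 0 g = 0
    have hzero : (![(2:ℂ) ^ q * (0 : Fin 2 → ℂ) 0, (2:ℂ) ^ p * (0 : Fin 2 → ℂ) 1])
        = (0 : Fin 2 → ℂ) := by
      funext i; fin_cases i <;> simp
    have h2pow : ∀ k : ℕ, k ≠ 0 → (2:ℂ) ^ k ≠ 1 := by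
      intro k hk hE
      have habs : ((2:ℝ) ^ k) = 1 := by
        have := congrArg (‖·‖) hE
        simpa [norm_pow] using this
      have : (1:ℝ) < 2 ^ k := one_lt_pow₀ one_lt_two hk
      linarith
    have hA0 : MvPolynomial.eval (0 : Fin 2 → ℂ) f = 0 := by
      have h2 := hf 2 two_ne_zero 0
      rw [hzero] at h2
      have : ((2:ℂ) ^ (p * q * m) - 1) * MvPolynomial.eval (0 : Fin 2 → ℂ) f = 0 := by
        linear_combination - h2
      rcases mul_eq_zero.mp this with hc | hc
      · exact absurd (by linear_combination hc)
          (h2pow _ (Nat.mul_pos (Nat.mul_pos hp hq) hm).ne')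
      · exact hc
    have hB0 : MvPolynomial.eval (0 : Fin 2 → ℂ) g = 0 := by
      have h2 := hg 2 two_ne_zero 0
      rw [hzero] at h2
      have : ((2:ℂ) ^ (p * q * n) - 1) * MvPolynomial.eval (0 : Fin 2 → ℂ) g = 0 := by
        linear_combination - h2
      rcases mul_eq_zero.mp this with hc | hc
      · exact absurd (by linear_combination hc)
          (h2pow _ (Nat.mul_pos (Nat.mul_pos hp hq) hn).ne')
      · exact hc
    obtain ⟨j, hj⟩ := not_forall.mp hnz
    have hbar : wDbar F j 0 = 0 := by
      rw [(hWd0 j).2, hA0, zero_mul]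
    have hwd : wD F j 0 ≠ 0 := fun h0 => hj ⟨h0, hbar⟩
    set ξ := (t:ℂ) * fderiv ℂ h 0 (Pi.single j 1) with hξdef
    have hξ : ξ ≠ 0 := by
      rw [(hWd0 j).1, hB0, map_zero, zero_mul, zero_add] at hwd
      exact hwd
    have v1 : fderiv ℝ F 0 (Pi.single j 1) = ξ := by
      rw [happ0, hA0, hB0]
      simp [hξdef]
    have v2 : fderiv ℝ F 0 (Pi.single j Complex.I) = Complex.I * ξ := by
      rw [happ0, hA0, hB0, single_I, map_smul]
      simp [smul_eq_mul]
      ring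
    obtain ⟨a, b, hab, heq⟩ := hsing
    have hre : HasFDerivAt (fun z : Fin 2 → ℂ => (F z).re)
        (Complex.reCLM.comp (fderiv ℝ F 0)) 0 :=
      (Complex.reCLM.hasFDerivAt).comp 0 hdF0.hasFDerivAt
    have him : HasFDerivAt (fun z : Fin 2 → ℂ => (F z).im)
        (Complex.imCLM.comp (fderiv ℝ F 0)) 0 :=
      (Complex.imCLM.hasFDerivAt).comp 0 hdF0.hasFDerivAt
    have hval : ∀ v : Fin 2 → ℂ,
        a * (fderiv ℝ F 0 v).re + b * (fderiv ℝ F 0 v).im = 0 := by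
      intro v
      have := congrArg (fun L : ((Fin 2 → ℂ) →L[ℝ] ℝ) => L v) heq
      simpa [hre.fderiv, him.fderiv] using this
    have eq1 : a * ξ.re + b * ξ.im = 0 := by
      have := hval (Pi.single j 1)
      rwa [v1] at this
    have eq2 : -(a * ξ.im) + b * ξ.re = 0 := by
      have := hval (Pi.single j Complex.I)
      rw [v2] at this
      simpa [Complex.mul_re, Complex.mul_im] using this
    have hnsq : 0 < ξ.re ^ 2 + ξ.im ^ 2 := by
      have := Complex.normSq_pos.mpr hξ
      rw [Complex.normSq_apply] at this
      nlinarith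
    have ha0 : a = 0 := by
      have : a * (ξ.re ^ 2 + ξ.im ^ 2) = 0 := by
        linear_combination ξ.re * eq1 - ξ.im * eq2
      rcases mul_eq_zero.mp this with hc | hc
      · exact hc
      · exact absurd hc hnsq.ne'
    have hb0 : b = 0 := by
      have : b * (ξ.re ^ 2 + ξ.im ^ 2) = 0 := by
        linear_combination ξ.im * eq1 + ξ.re * eq2
      rcases mul_eq_zero.mp this with hc | hc
      · exact hc
      · exact absurd hc hnsq.ne'
    exact hab ⟨ha0, hb0⟩

end
end

section
/- Let m ≥ 2, let f ∈ ℂ[z_1,z_2] be homogeneous of degree m, let β, γ ∈ ℂ and t ∈ ℝ, and set g(z) = z_1 + β·z_2, h(z) = z_1^m·conj(z_1) + z_1^{m−1} + γ·z_2^{m−1}, and F_t(z) = f(z)·conj(g(z)) + t·h(z). Then at every point of ℂ² the determinant of the mixed Hessian of F_t equals t²·m²·conj(β)²·z_1^{2m−2}·(∂f/∂z_2)². -/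
open Complex

open ContinuousLinearMap
noncomputable section

def clm (a : Fin 2 → ℂ) : (Fin 2 → ℂ) →L[ℂ] ℂ :=
  a 0 • ContinuousLinearMap.proj 0 + a 1 • ContinuousLinearMap.proj 1

lemma clm_apply (a v : Fin 2 → ℂ) : clm a v = a 0 * v 0 + a 1 * v 1 := by
  simp [clm, smul_eq_mul]

def HolD (φ : (Fin 2 → ℂ) → ℂ) (a : (Fin 2 → ℂ) → Fin 2 → ℂ) : Prop :=
  ∀ z, HasFDerivAt φ (clm (a z)) z

lemma holD_const (c : ℂ) : HolD (fun _ => c) (fun _ _ => 0) := by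
  intro z
  have : clm (fun _ : Fin 2 => (0:ℂ)) = 0 := by ext v; simp [clm_apply]
  rw [this]; exact hasFDerivAt_const c z

lemma holD_coord (i : Fin 2) :
    HolD (fun z => z i) (fun _ j => if i = j then 1 else 0) := by
  intro z
  have : clm (fun j => if i = j then (1:ℂ) else 0)
      = (ContinuousLinearMap.proj i : (Fin 2 → ℂ) →L[ℂ] ℂ) := by
    ext v; fin_cases i <;> simp [clm_apply]
  rw [this]; exact (ContinuousLinearMap.proj i : (Fin 2 → ℂ) →L[ℂ] ℂ).hasFDerivAt

lemma holD_add {φ ψ a b} (hφ : HolD φ a) (hψ : HolD ψ b) :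
    HolD (fun z => φ z + ψ z) (fun z j => a z j + b z j) := by
  intro z
  have : clm (fun j => a z j + b z j) = clm (a z) + clm (b z) := by
    ext v; simp [clm_apply]; ring
  rw [this]; exact (hφ z).add (hψ z)

lemma holD_mul {φ ψ a b} (hφ : HolD φ a) (hψ : HolD ψ b) :
    HolD (fun z => φ z * ψ z) (fun z j => a z j * ψ z + φ z * b z j) := by
  intro z
  have : clm (fun j => a z j * ψ z + φ z * b z j) = φ z • clm (b z) + ψ z • clm (a z) := by
    ext v; simp [clm_apply, smul_eq_mul]; ring
  rw [this]; exact (hφ z).mul (hψ z)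

lemma holD_eval (p : MvPolynomial (Fin 2) ℂ) :
    HolD (fun z => MvPolynomial.eval z p)
      (fun z j => MvPolynomial.eval z (MvPolynomial.pderiv j p)) := by
  induction p using MvPolynomial.induction_on with
  | C c => simpa using holD_const c
  | add p q hp hq =>
      have := holD_add hp hq
      simpa using this
  | mul_X p i hp =>
      have h := holD_mul hp (holD_coord i)
      have e1 : (fun z : Fin 2 → ℂ => MvPolynomial.eval z (p * MvPolynomial.X i))
          = fun z => MvPolynomial.eval z p * z i := by
        funext z; simp
      have e2 : (fun (z : Fin 2 → ℂ) j =>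
            MvPolynomial.eval z (MvPolynomial.pderiv j (p * MvPolynomial.X i)))
          = fun z j => MvPolynomial.eval z (MvPolynomial.pderiv j p) * z i
              + MvPolynomial.eval z p * (if i = j then 1 else 0) := by
        funext z j
        rw [MvPolynomial.pderiv_mul]
        simp [MvPolynomial.pderiv_X, Pi.single_apply, apply_ite (MvPolynomial.eval z)]
      rw [e1, e2]; exact h

lemma holD_conj_hasFDerivAt {ψ b} (hψ : HolD ψ b) (w : Fin 2 → ℂ) :
    HasFDerivAt (fun z => (starRingEnd ℂ) (ψ z))
      (((Complex.conjCLE : ℂ ≃L[ℝ] ℂ) : ℂ →L[ℝ] ℂ).comp ((clm (b w)).restrictScalars ℝ)) w := by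
  have h := (Complex.conjCLE.hasFDerivAt).comp w ((hψ w).restrictScalars ℝ)
  simpa [Function.comp_def, Complex.conjCLE_apply] using h

lemma master_fderiv {φ1 ψ1 φ2 ψ2 φ3 a1 b1 a2 b2 a3}
    (h1 : HolD φ1 a1) (k1 : HolD ψ1 b1) (h2 : HolD φ2 a2) (k2 : HolD ψ2 b2)
    (h3 : HolD φ3 a3) (w v : Fin 2 → ℂ) :
    fderiv ℝ (fun z => φ1 z * (starRingEnd ℂ) (ψ1 z)
        + φ2 z * (starRingEnd ℂ) (ψ2 z) + φ3 z) w v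
      = clm (a1 w) v * (starRingEnd ℂ) (ψ1 w) + φ1 w * (starRingEnd ℂ) (clm (b1 w) v)
        + clm (a2 w) v * (starRingEnd ℂ) (ψ2 w) + φ2 w * (starRingEnd ℂ) (clm (b2 w) v)
        + clm (a3 w) v := by
  have H := ((((h1 w).restrictScalars ℝ).mul (holD_conj_hasFDerivAt k1 w)).add
      (((h2 w).restrictScalars ℝ).mul (holD_conj_hasFDerivAt k2 w))).add
      ((h3 w).restrictScalars ℝ)
  rw [show (fun z => φ1 z * (starRingEnd ℂ) (ψ1 z) + φ2 z * (starRingEnd ℂ) (ψ2 z) + φ3 z) = (((φ1 * fun z => (starRingEnd ℂ) (ψ1 z)) + φ2 * fun z => (starRingEnd ℂ) (ψ2 z)) + φ3) from rfl, H.fderiv]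
  simp [ContinuousLinearMap.add_apply, ContinuousLinearMap.smul_apply,
    ContinuousLinearMap.coe_comp', Function.comp_def,
    ContinuousLinearMap.coe_restrictScalars', Complex.conjCLE_apply, smul_eq_mul]
  ring

lemma clm_single (a : Fin 2 → ℂ) (j : Fin 2) (c : ℂ) :
    clm a (Pi.single j c) = a j * c := by
  fin_cases j <;> simp [clm_apply]

lemma master_wD {φ1 ψ1 φ2 ψ2 φ3 a1 b1 a2 b2 a3}
    (h1 : HolD φ1 a1) (k1 : HolD ψ1 b1) (h2 : HolD φ2 a2) (k2 : HolD ψ2 b2)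
    (h3 : HolD φ3 a3) (j : Fin 2) (w : Fin 2 → ℂ) :
    wD (fun z => φ1 z * (starRingEnd ℂ) (ψ1 z)
        + φ2 z * (starRingEnd ℂ) (ψ2 z) + φ3 z) j w
      = a1 w j * (starRingEnd ℂ) (ψ1 w) + a2 w j * (starRingEnd ℂ) (ψ2 w) + a3 w j := by
  rw [wD, master_fderiv h1 k1 h2 k2 h3, master_fderiv h1 k1 h2 k2 h3]
  simp only [clm_single, map_mul, Complex.conj_I, mul_one]
  ring_nf
  simp only [Complex.I_sq]
  ring

lemma master_wDbar {φ1 ψ1 φ2 ψ2 φ3 a1 b1 a2 b2 a3}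
    (h1 : HolD φ1 a1) (k1 : HolD ψ1 b1) (h2 : HolD φ2 a2) (k2 : HolD ψ2 b2)
    (h3 : HolD φ3 a3) (j : Fin 2) (w : Fin 2 → ℂ) :
    wDbar (fun z => φ1 z * (starRingEnd ℂ) (ψ1 z)
        + φ2 z * (starRingEnd ℂ) (ψ2 z) + φ3 z) j w
      = φ1 w * (starRingEnd ℂ) (b1 w j) + φ2 w * (starRingEnd ℂ) (b2 w j) := by
  rw [wDbar, master_fderiv h1 k1 h2 k2 h3, master_fderiv h1 k1 h2 k2 h3]
  simp only [clm_single, map_mul, Complex.conj_I, mul_one]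
  ring_nf
  simp only [Complex.I_sq]
  ring

lemma HolD.congr_d {φ a a'} (h : HolD φ a) (ha : ∀ z j, a' z j = a z j) : HolD φ a' := by
  have : a' = a := funext fun z => funext (ha z)
  rw [this]; exact h

lemma holD_pow (i : Fin 2) (k : ℕ) :
    HolD (fun z => z i ^ k) (fun z j => if i = j then (k : ℂ) * z i ^ (k - 1) else 0) := by
  intro z
  have h := (hasDerivAt_pow k (z i)).comp_hasFDerivAt z
    ((ContinuousLinearMap.proj i : (Fin 2 → ℂ) →L[ℂ] ℂ).hasFDerivAt (x := z))
  have e : clm (fun j => if i = j then (k : ℂ) * z i ^ (k - 1) else 0)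
      = ((k : ℂ) * z i ^ (k - 1)) • (ContinuousLinearMap.proj i : (Fin 2 → ℂ) →L[ℂ] ℂ) := by
    ext v; fin_cases i <;> simp [clm_apply]
  rw [e]; exact h

lemma holD_wD {φ a} (h : HolD φ a) (j : Fin 2) (w : Fin 2 → ℂ) :
    wD φ j w = a w j := by
  have e : φ = fun z => (0:ℂ) * (starRingEnd ℂ) ((0:ℂ))
      + (0:ℂ) * (starRingEnd ℂ) ((0:ℂ)) + φ z := by funext z; simp
  calc wD φ j w = wD (fun z => (0:ℂ) * (starRingEnd ℂ) ((0:ℂ))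
      + (0:ℂ) * (starRingEnd ℂ) ((0:ℂ)) + φ z) j w := by rw [← e]
    _ = a w j := by
        rw [master_wD (holD_const 0) (holD_const 0) (holD_const 0) (holD_const 0) h j w]
        simp

lemma holD_wDbar {φ a} (h : HolD φ a) (j : Fin 2) (w : Fin 2 → ℂ) :
    wDbar φ j w = 0 := by
  have e : φ = fun z => (0:ℂ) * (starRingEnd ℂ) ((0:ℂ))
      + (0:ℂ) * (starRingEnd ℂ) ((0:ℂ)) + φ z := by funext z; simp
  calc wDbar φ j w = wDbar (fun z => (0:ℂ) * (starRingEnd ℂ) ((0:ℂ))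
      + (0:ℂ) * (starRingEnd ℂ) ((0:ℂ)) + φ z) j w := by rw [← e]
    _ = 0 := by
        rw [master_wDbar (holD_const 0) (holD_const 0) (holD_const 0) (holD_const 0) h j w]
        simp

lemma my_det_fin_four (M : Matrix (Fin 4) (Fin 4) ℂ) :
    M.det =
      M 0 0 * M 1 1 * M 2 2 * M 3 3 - M 0 0 * M 1 1 * M 2 3 * M 3 2 -
      M 0 0 * M 1 2 * M 2 1 * M 3 3 + M 0 0 * M 1 2 * M 2 3 * M 3 1 +
      M 0 0 * M 1 3 * M 2 1 * M 3 2 - M 0 0 * M 1 3 * M 2 2 * M 3 1 -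
      M 0 1 * M 1 0 * M 2 2 * M 3 3 + M 0 1 * M 1 0 * M 2 3 * M 3 2 +
      M 0 1 * M 1 2 * M 2 0 * M 3 3 - M 0 1 * M 1 2 * M 2 3 * M 3 0 -
      M 0 1 * M 1 3 * M 2 0 * M 3 2 + M 0 1 * M 1 3 * M 2 2 * M 3 0 +
      M 0 2 * M 1 0 * M 2 1 * M 3 3 - M 0 2 * M 1 0 * M 2 3 * M 3 1 -
      M 0 2 * M 1 1 * M 2 0 * M 3 3 + M 0 2 * M 1 1 * M 2 3 * M 3 0 +
      M 0 2 * M 1 3 * M 2 0 * M 3 1 - M 0 2 * M 1 3 * M 2 1 * M 3 0 -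
      M 0 3 * M 1 0 * M 2 1 * M 3 2 + M 0 3 * M 1 0 * M 2 2 * M 3 1 +
      M 0 3 * M 1 1 * M 2 0 * M 3 2 - M 0 3 * M 1 1 * M 2 2 * M 3 0 -
      M 0 3 * M 1 2 * M 2 0 * M 3 1 + M 0 3 * M 1 2 * M 2 1 * M 3 0 := by
  rw [Matrix.det_succ_row_zero, Fin.sum_univ_four]
  norm_num [Matrix.det_fin_three, Matrix.submatrix_apply, Fin.succAbove, Fin.lt_def,
    show (Fin.succ 2 : Fin 4) = 3 from rfl, show ((3 : Fin 4) : ℕ) = 3 from rfl,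
    show ((2 : Fin 3) : ℕ) = 2 from rfl, show (Fin.castSucc 2 : Fin 4) = 2 from rfl]
  ring

/-- For `F_t(z) = f(z)·conj(z₁ + βz₂) + t·(z₁^m·conj(z₁) + z₁^{m−1} + γz₂^{m−1})` with
`f` homogeneous of degree `m ≥ 2`, the determinant of the mixed Hessian of `F_t` equals
`t²·m²·conj(β)²·z₁^{2m−2}·(∂f/∂z₂)²` at every point. -/
theorem stmt_15 (m : ℕ) (hm : 2 ≤ m) (f : MvPolynomial (Fin 2) ℂ)
    (hf : f.IsHomogeneous m) (β γ : ℂ) (t : ℝ)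
    (F : (Fin 2 → ℂ) → ℂ)
    (hF : F = fun z =>
      MvPolynomial.eval z f * (starRingEnd ℂ) (z 0 + β * z 1) +
        (t : ℂ) * (z 0 ^ m * (starRingEnd ℂ) (z 0) + z 0 ^ (m - 1) + γ * z 1 ^ (m - 1))) :
    ∀ w : Fin 2 → ℂ,
      (mixedHessian F w).det =
        (t : ℂ) ^ 2 * (m : ℂ) ^ 2 * (starRingEnd ℂ) β ^ 2 * w 0 ^ (2 * m - 2) *
          MvPolynomial.eval w (MvPolynomial.pderiv 1 f) ^ 2 := by
  intro w
  have hE := holD_eval f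
  have hE0 := holD_eval (MvPolynomial.pderiv 0 f)
  have hE1 := holD_eval (MvPolynomial.pderiv 1 f)
  have hG : HolD (fun z => z 0 + β * z 1) (fun _ => ![(1:ℂ), β]) := by
    refine (holD_add (holD_coord 0) (holD_mul (holD_const β) (holD_coord 1))).congr_d ?_
    intro z j; fin_cases j <;> simp
  have hC0 : HolD (fun z => z 0) (fun _ => ![(1:ℂ), 0]) := by
    refine (holD_coord 0).congr_d ?_
    intro z j; fin_cases j <;> simp
  have hP2 : HolD (fun z => (t:ℂ) * z 0 ^ m)
      (fun z => ![(t:ℂ) * ((m:ℂ) * z 0 ^ (m-1)), 0]) := by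
    refine (holD_mul (holD_const (t:ℂ)) (holD_pow 0 m)).congr_d ?_
    intro z j; fin_cases j <;> simp
  have hP3 : HolD (fun z => (t:ℂ) * z 0 ^ (m-1) + (t:ℂ) * γ * z 1 ^ (m-1))
      (fun z => ![(t:ℂ) * (((m-1:ℕ):ℂ) * z 0 ^ (m-2)),
        (t:ℂ) * γ * (((m-1:ℕ):ℂ) * z 1 ^ (m-2))]) := by
    have h21 : m - 1 - 1 = m - 2 := by omega
    refine (holD_add (holD_mul (holD_const (t:ℂ)) (holD_pow 0 (m-1)))
      (holD_mul (holD_const ((t:ℂ)*γ)) (holD_pow 1 (m-1)))).congr_d ?_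
    intro z j; fin_cases j <;> simp [h21]
  have hFeq : F = fun z => (MvPolynomial.eval z f) * (starRingEnd ℂ) (z 0 + β * z 1)
      + ((t:ℂ) * z 0 ^ m) * (starRingEnd ℂ) (z 0)
      + ((t:ℂ) * z 0 ^ (m-1) + (t:ℂ) * γ * z 1 ^ (m-1)) := by
    rw [hF]; funext z; ring
  -- first Wirtinger derivatives as closed-form functions
  have hfunbar0 : (fun z => wDbar F 0 z)
      = fun z => MvPolynomial.eval z f + (t:ℂ) * z 0 ^ m := by
    funext z
    rw [hFeq, master_wDbar hE hG hP2 hC0 hP3 0 z]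
    simp
  have hfunbar1 : (fun z => wDbar F 1 z)
      = fun z => MvPolynomial.eval z f * (starRingEnd ℂ) β := by
    funext z
    rw [hFeq, master_wDbar hE hG hP2 hC0 hP3 1 z]
    simp
  have hfunD0 : (fun z => wD F 0 z)
      = fun z => MvPolynomial.eval z (MvPolynomial.pderiv 0 f)
          * (starRingEnd ℂ) (z 0 + β * z 1)
        + ((t:ℂ) * ((m:ℂ) * z 0 ^ (m-1))) * (starRingEnd ℂ) (z 0)
        + (t:ℂ) * (((m-1:ℕ):ℂ) * z 0 ^ (m-2)) := by
    funext z
    rw [hFeq, master_wD hE hG hP2 hC0 hP3 0 z]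
    simp
  have hfunD1 : (fun z => wD F 1 z)
      = fun z => MvPolynomial.eval z (MvPolynomial.pderiv 1 f)
          * (starRingEnd ℂ) (z 0 + β * z 1)
        + (0:ℂ) * (starRingEnd ℂ) (z 0)
        + (t:ℂ) * γ * (((m-1:ℕ):ℂ) * z 1 ^ (m-2)) := by
    funext z
    rw [hFeq, master_wD hE hG hP2 hC0 hP3 1 z]
    simp
  -- HolD data for the first derivatives' pieces
  have hH0 : HolD (fun z => MvPolynomial.eval z f + (t:ℂ) * z 0 ^ m)
      (fun z => ![MvPolynomial.eval z (MvPolynomial.pderiv 0 f)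
          + (t:ℂ) * ((m:ℂ) * z 0 ^ (m-1)),
        MvPolynomial.eval z (MvPolynomial.pderiv 1 f)]) := by
    refine (holD_add hE hP2).congr_d ?_
    intro z j; fin_cases j <;> simp
  have hH1 : HolD (fun z => MvPolynomial.eval z f * (starRingEnd ℂ) β)
      (fun z j => MvPolynomial.eval z (MvPolynomial.pderiv j f) * (starRingEnd ℂ) β) := by
    refine (holD_mul hE (holD_const ((starRingEnd ℂ) β))).congr_d ?_
    intro z j; simp
  have hQ := holD_mul (holD_const (t:ℂ)) (holD_mul (holD_const (m:ℂ)) (holD_pow 0 (m-1)))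
  have hR0 := holD_mul (holD_const (t:ℂ))
    (holD_mul (holD_const ((m-1:ℕ):ℂ)) (holD_pow 0 (m-2)))
  have hR1 := holD_mul (holD_const ((t:ℂ)*γ))
    (holD_mul (holD_const ((m-1:ℕ):ℂ)) (holD_pow 1 (m-2)))
  have hZ := holD_const (0:ℂ)
  -- matrix entries
  have B00 : mixedHessian F w (Sum.inl 0) (Sum.inr 0)
      = MvPolynomial.eval w (MvPolynomial.pderiv 0 f) + (t:ℂ) * ((m:ℂ) * w 0 ^ (m-1)) := by
    show wD (fun z => wDbar F 0 z) 0 w = _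
    rw [hfunbar0, holD_wD hH0 0 w]; simp
  have B10 : mixedHessian F w (Sum.inl 1) (Sum.inr 0)
      = MvPolynomial.eval w (MvPolynomial.pderiv 1 f) := by
    show wD (fun z => wDbar F 0 z) 1 w = _
    rw [hfunbar0, holD_wD hH0 1 w]; simp
  have B01 : mixedHessian F w (Sum.inl 0) (Sum.inr 1)
      = MvPolynomial.eval w (MvPolynomial.pderiv 0 f) * (starRingEnd ℂ) β := by
    show wD (fun z => wDbar F 1 z) 0 w = _
    rw [hfunbar1, holD_wD hH1 0 w]
  have B11 : mixedHessian F w (Sum.inl 1) (Sum.inr 1)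
      = MvPolynomial.eval w (MvPolynomial.pderiv 1 f) * (starRingEnd ℂ) β := by
    show wD (fun z => wDbar F 1 z) 1 w = _
    rw [hfunbar1, holD_wD hH1 1 w]
  have D00 : mixedHessian F w (Sum.inr 0) (Sum.inr 0) = 0 := by
    show wDbar (fun z => wDbar F 0 z) 0 w = _
    rw [hfunbar0]; exact holD_wDbar hH0 0 w
  have D10 : mixedHessian F w (Sum.inr 1) (Sum.inr 0) = 0 := by
    show wDbar (fun z => wDbar F 0 z) 1 w = _
    rw [hfunbar0]; exact holD_wDbar hH0 1 w
  have D01 : mixedHessian F w (Sum.inr 0) (Sum.inr 1) = 0 := by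
    show wDbar (fun z => wDbar F 1 z) 0 w = _
    rw [hfunbar1]; exact holD_wDbar hH1 0 w
  have D11 : mixedHessian F w (Sum.inr 1) (Sum.inr 1) = 0 := by
    show wDbar (fun z => wDbar F 1 z) 1 w = _
    rw [hfunbar1]; exact holD_wDbar hH1 1 w
  have C00 : mixedHessian F w (Sum.inr 0) (Sum.inl 0)
      = MvPolynomial.eval w (MvPolynomial.pderiv 0 f) + (t:ℂ) * ((m:ℂ) * w 0 ^ (m-1)) := by
    show wDbar (fun z => wD F 0 z) 0 w = _
    rw [hfunD0]
    have h := master_wDbar hE0 hG hQ hC0 hR0 0 w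
    simpa using h
  have C10 : mixedHessian F w (Sum.inr 1) (Sum.inl 0)
      = MvPolynomial.eval w (MvPolynomial.pderiv 0 f) * (starRingEnd ℂ) β := by
    show wDbar (fun z => wD F 0 z) 1 w = _
    rw [hfunD0]
    have h := master_wDbar hE0 hG hQ hC0 hR0 1 w
    simpa using h
  have C01 : mixedHessian F w (Sum.inr 0) (Sum.inl 1)
      = MvPolynomial.eval w (MvPolynomial.pderiv 1 f) := by
    show wDbar (fun z => wD F 1 z) 0 w = _
    rw [hfunD1]
    have h := master_wDbar hE1 hG hZ hC0 hR1 0 w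
    simpa using h
  have C11 : mixedHessian F w (Sum.inr 1) (Sum.inl 1)
      = MvPolynomial.eval w (MvPolynomial.pderiv 1 f) * (starRingEnd ℂ) β := by
    show wDbar (fun z => wD F 1 z) 1 w = _
    rw [hfunD1]
    have h := master_wDbar hE1 hG hZ hC0 hR1 1 w
    simpa using h
  -- determinant
  have hdet : (mixedHessian F w).det
      = (Matrix.reindex finSumFinEquiv finSumFinEquiv (mixedHessian F w)).det :=
    (Matrix.det_reindex_self _ _).symm
  have s0 : (finSumFinEquiv.symm : Fin (2+2) → Fin 2 ⊕ Fin 2) 0 = Sum.inl 0 := rfl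
  have s1 : (finSumFinEquiv.symm : Fin (2+2) → Fin 2 ⊕ Fin 2) 1 = Sum.inl 1 := rfl
  have s2 : (finSumFinEquiv.symm : Fin (2+2) → Fin 2 ⊕ Fin 2) 2 = Sum.inr 0 := rfl
  have s3 : (finSumFinEquiv.symm : Fin (2+2) → Fin 2 ⊕ Fin 2) 3 = Sum.inr 1 := rfl
  rw [hdet, my_det_fin_four]
  simp only [Matrix.reindex_apply, Matrix.submatrix_apply, s0, s1, s2, s3,
    B00, B10, B01, B11, C00, C10, C01, C11, D00, D10, D01, D11]
  rw [show 2*m-2 = (m-1)+(m-1) from by omega, pow_add]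
  ring

end
end

section
/- For (v_1, v_2) ∈ ℂ², the equation v_1² + 2·conj(v_1)·v_2 = 0 holds if and only if v_1 = 0 or there exist r > 0 and θ ∈ ℝ with v_1 = 2r·e^{iθ} and v_2 = −r·e^{3iθ}. Consequently, the zero set of v_1² + 2·conj(v_1)·v_2 is the union of the plane {v_1 = 0} and the set {(2r·e^{iθ}, −r·e^{3iθ}) : r > 0, θ ∈ ℝ}, and this zero set is invariant under the circle action (v_1,v_2) ↦ (s·v_1, s³·v_2) for s ∈ ℂ with |s| = 1. -/
open Complex

lemma conj_exp_mul_I (θ : ℝ) :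
    (starRingEnd ℂ) (Complex.exp ((θ : ℂ) * Complex.I)) = Complex.exp (-((θ : ℂ) * Complex.I)) := by
  rw [← Complex.exp_conj]
  congr 1
  rw [map_mul, Complex.conj_ofReal, Complex.conj_I]
  ring

/-- `v₁² + 2·conj(v₁)·v₂ = 0` iff `v₁ = 0` or `(v₁,v₂) = (2r·e^{iθ}, −r·e^{3iθ})` for
some `r > 0`, `θ ∈ ℝ`; the zero set is the corresponding union, and it is invariant
under `(v₁,v₂) ↦ (s·v₁, s³·v₂)` for `|s| = 1`. -/
theorem stmt_16 :
    (∀ v₁ v₂ : ℂ, v₁ ^ 2 + 2 * (starRingEnd ℂ) v₁ * v₂ = 0 ↔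
      (v₁ = 0 ∨ ∃ r : ℝ, 0 < r ∧ ∃ θ : ℝ,
        v₁ = 2 * (r : ℂ) * Complex.exp ((θ : ℂ) * Complex.I) ∧
        v₂ = -((r : ℂ) * Complex.exp (3 * (θ : ℂ) * Complex.I)))) ∧
    ({v : ℂ × ℂ | v.1 ^ 2 + 2 * (starRingEnd ℂ) v.1 * v.2 = 0} =
      {v : ℂ × ℂ | v.1 = 0} ∪
        {v : ℂ × ℂ | ∃ r : ℝ, 0 < r ∧ ∃ θ : ℝ,
          v.1 = 2 * (r : ℂ) * Complex.exp ((θ : ℂ) * Complex.I) ∧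
          v.2 = -((r : ℂ) * Complex.exp (3 * (θ : ℂ) * Complex.I))}) ∧
    (∀ s : ℂ, ‖s‖ = 1 → ∀ v₁ v₂ : ℂ,
      v₁ ^ 2 + 2 * (starRingEnd ℂ) v₁ * v₂ = 0 →
      (s * v₁) ^ 2 + 2 * (starRingEnd ℂ) (s * v₁) * (s ^ 3 * v₂) = 0) := by
  have key : ∀ v₁ v₂ : ℂ, v₁ ^ 2 + 2 * (starRingEnd ℂ) v₁ * v₂ = 0 ↔
      (v₁ = 0 ∨ ∃ r : ℝ, 0 < r ∧ ∃ θ : ℝ,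
        v₁ = 2 * (r : ℂ) * Complex.exp ((θ : ℂ) * Complex.I) ∧
        v₂ = -((r : ℂ) * Complex.exp (3 * (θ : ℂ) * Complex.I))) := by
    intro v₁ v₂
    constructor
    · intro h
      by_cases hv : v₁ = 0
      · exact Or.inl hv
      · right
        have habs : ‖v₁‖ ≠ 0 := by simpa using hv
        have hv1 : v₁ = (‖v₁‖ : ℂ) * Complex.exp ((Complex.arg v₁ : ℂ) * Complex.I) :=
          (Complex.norm_mul_exp_arg_mul_I v₁).symm
        set θ := Complex.arg v₁ with hθ
        refine ⟨‖v₁‖ / 2, by positivity, θ, ?_, ?_⟩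
        · push_cast
          linear_combination hv1
        · rw [hv1, map_mul, Complex.conj_ofReal, conj_exp_mul_I] at h
          have hmul : Complex.exp (-((θ : ℂ) * Complex.I)) * Complex.exp (3 * (θ : ℂ) * Complex.I)
              = Complex.exp ((θ : ℂ) * Complex.I) * Complex.exp ((θ : ℂ) * Complex.I) := by
            rw [← Complex.exp_add, ← Complex.exp_add]; ring_nf
          have hne : (2 : ℂ) * (‖v₁‖ : ℂ) * Complex.exp (-((θ : ℂ) * Complex.I)) ≠ 0 :=
            mul_ne_zero (mul_ne_zero two_ne_zero (by exact_mod_cast habs)) (Complex.exp_ne_zero _)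
          apply mul_left_cancel₀ hne
          push_cast
          linear_combination h + (‖v₁‖ : ℂ) ^ 2 * hmul
    · rintro (rfl | ⟨r, hr, θ, rfl, rfl⟩)
      · simp
      · have hc : (starRingEnd ℂ) (2 * (r : ℂ) * Complex.exp ((θ : ℂ) * Complex.I))
            = 2 * (r : ℂ) * Complex.exp (-((θ : ℂ) * Complex.I)) := by
          rw [map_mul, map_mul, conj_exp_mul_I, Complex.conj_ofReal, map_ofNat]
        rw [hc]
        have hmul : Complex.exp (-((θ : ℂ) * Complex.I)) * Complex.exp (3 * (θ : ℂ) * Complex.I)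
            = Complex.exp ((θ : ℂ) * Complex.I) * Complex.exp ((θ : ℂ) * Complex.I) := by
          rw [← Complex.exp_add, ← Complex.exp_add]; ring_nf
        linear_combination (-4 * (r : ℂ) ^ 2) * hmul
  refine ⟨key, ?_, ?_⟩
  · ext ⟨v₁, v₂⟩
    simpa [Set.mem_union] using key v₁ v₂
  · intro s hs v₁ v₂ h
    have hss : s * (starRingEnd ℂ) s = 1 := by
      rw [Complex.mul_conj, Complex.normSq_eq_norm_sq, hs]; norm_num
    simp only [map_mul]
    linear_combination s ^ 2 * h + 2 * (starRingEnd ℂ) v₁ * v₂ * s ^ 2 * hss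
end
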